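/- arXiv:1702.05854 — 5 statements merged into one kernel-verified Lean document; each statement's English description precedes it below -/
import Mathlib

section
/- For every stochastic graph 𝒢 = (V, E, w), every probabilistic suspect set 𝒱_I = (V_I, p), and every edge set T ⊆ E, the influence suspension of T equals the total walk probability of the hitting self-avoiding walks interdicted by T; precisely: (i) the sum of Pr[h is an HSAW of (g, X)] over all finite sequences h of pairwise distinct nodes ending at a node of V_I equals I_𝒢(𝒱_I), and (ii) the sum of Pr[h is an HSAW of (g, X)] over all such sequences whose edge set intersects T equals D(T, 𝒱_I). Consequently, if I_𝒢(𝒱_I) > 0 then D(T, 𝒱_I) = I_𝒢(𝒱_I) · Pr[T intersects the edge set of a random HSAW], where a random HSAW is drawn with probability proportional to its walk probability. -/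
noncomputable section
open scoped Classical

/-- Probability of a live-edge sample `g : V → Option V` under weights `w`:
independently for each node `v`, `g v = some u` with probability `w u v` and
`g v = none` with probability `1 − ∑_u w u v`. -/
def sampleProb {V : Type} [Fintype V] (w : V → V → ℝ) (g : V → Option V) : ℝ :=
  ∏ v : V, (g v).elim (1 - ∑ u : V, w u v) (fun u => w u v)

/-- `v` is reachable from the seed set `S` in the sample graph of `g`,
which has an edge `(u, v)` exactly when `g v = some u`. -/
def Reachable {V : Type} (g : V → Option V) (S : Finset V) (v : V) : Prop :=
  ∃ s ∈ S, Relation.ReflTransGen (fun x y => g y = some x) s v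

/-- Influence spread of a seed set `S`: the expected number of nodes reachable
from `S` in the live-edge sample graph. -/
def influence {V : Type} [Fintype V] [DecidableEq V] (w : V → V → ℝ) (S : Finset V) : ℝ :=
  ∑ g : V → Option V, sampleProb w g * (Nat.card {v : V // Reachable g S v} : ℝ)

/-- Probability that the random seed set equals `X`, when each `v ∈ VI` is
included independently with probability `p v`. -/
def seedProb {V : Type} [DecidableEq V] (VI : Finset V) (p : V → ℝ) (X : Finset V) : ℝ :=
  (∏ u ∈ X, p u) * ∏ v ∈ VI \ X, (1 - p v)

/-- Expected influence spread of the probabilistic suspect set `(VI, p)`. -/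
def influenceVI {V : Type} [Fintype V] [DecidableEq V]
    (w : V → V → ℝ) (VI : Finset V) (p : V → ℝ) : ℝ :=
  ∑ X ∈ VI.powerset, seedProb VI p X * influence w X

/-- `h = ⟨v₁,…,v_l⟩` is a hitting self-avoiding walk of `(g, X)`: a nonempty
list of pairwise distinct nodes with `g vᵢ = some vᵢ₊₁` for `1 ≤ i < l`
and `{v₁,…,v_l} ∩ X = {v_l}`. -/
def IsHSAW {V : Type} [DecidableEq V] (g : V → Option V) (X : Finset V) (h : List V) : Prop :=
  h ≠ [] ∧ h.Nodup ∧ h.Chain' (fun a b => g a = some b) ∧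
    ∀ v ∈ h, (v ∈ X ↔ h.getLast? = some v)

/-- Probability, over the random pair `(g, X)`, that the fixed walk `h`
is a hitting self-avoiding walk of `(g, X)`. -/
def walkProb {V : Type} [Fintype V] [DecidableEq V]
    (w : V → V → ℝ) (VI : Finset V) (p : V → ℝ) (h : List V) : ℝ :=
  ∑ g : V → Option V, ∑ X ∈ VI.powerset,
    (if IsHSAW g X h then sampleProb w g * seedProb VI p X else 0)

/-- The edge set of a walk `⟨v₁,…,v_l⟩`: the edges `(vᵢ₊₁, vᵢ)` for `1 ≤ i < l`. -/
def walkEdges {V : Type} (h : List V) : List (V × V) :=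
  (h.zip h.tail).map Prod.swap


section Aux

variable {V : Type} [Fintype V] [DecidableEq V]

private lemma chain'_iff_zip {α : Type*} {R : α → α → Prop} :
    ∀ (l : List α), l.Chain' R ↔ ∀ p ∈ l.zip l.tail, R p.1 p.2
  | [] => by simp [List.Chain']
  | [a] => by simp [List.Chain']
  | a :: b :: t => by
    have ih := chain'_iff_zip (R := R) (b :: t)
    simp only [List.tail_cons] at ih ⊢
    rw [show List.Chain' R (a :: b :: t) ↔ R a b ∧ List.Chain' R (b :: t) from List.isChain_cons_cons, ih, List.zip_cons_cons]
    simp only [List.mem_cons, forall_eq_or_imp]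

private lemma zip_tail_map_fst {α : Type*} :
    ∀ (l : List α), (l.zip l.tail).map Prod.fst = l.dropLast
  | [] => rfl
  | [_] => rfl
  | a :: b :: t => by
    have ih := zip_tail_map_fst (b :: t)
    simp only [List.tail_cons] at ih ⊢
    rw [List.zip_cons_cons, List.map_cons, ih, List.dropLast_cons₂]

private lemma sum_sample_constrained (w : V → V → ℝ) (A : Finset V) (nxt : V → V) :
    (∑ g : V → Option V, if ∀ v ∈ A, g v = some (nxt v) then sampleProb w g else 0)
      = ∏ v ∈ A, w (nxt v) v := by
  classical
  have hF : ∀ g : V → Option V,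
      (if ∀ v ∈ A, g v = some (nxt v) then sampleProb w g else 0)
        = ∏ v : V, (if v ∈ A then (if g v = some (nxt v) then w (nxt v) v else 0)
            else (g v).elim (1 - ∑ u : V, w u v) (fun u => w u v)) := by
    intro g
    by_cases hg : ∀ v ∈ A, g v = some (nxt v)
    · rw [if_pos hg]
      unfold sampleProb
      refine Finset.prod_congr rfl fun v _ => ?_
      by_cases hv : v ∈ A
      · rw [if_pos hv, if_pos (hg v hv), hg v hv]; rfl
      · rw [if_neg hv]
    · rw [if_neg hg]
      push_neg at hg
      obtain ⟨v, hvA, hvg⟩ := hg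
      refine (Finset.prod_eq_zero (Finset.mem_univ v) ?_).symm
      rw [if_pos hvA, if_neg hvg]
  rw [Finset.sum_congr rfl fun g _ => hF g,
    show (∑ g : V → Option V, ∏ v : V,
        (if v ∈ A then (if g v = some (nxt v) then w (nxt v) v else 0)
          else (g v).elim (1 - ∑ u : V, w u v) (fun u => w u v)))
      = ∏ v : V, ∑ o : Option V,
        (if v ∈ A then (if o = some (nxt v) then w (nxt v) v else 0)
          else o.elim (1 - ∑ u : V, w u v) (fun u => w u v)) from
      (Fintype.prod_sum fun v o =>
        (if v ∈ A then (if o = some (nxt v) then w (nxt v) v else 0)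
          else o.elim (1 - ∑ u : V, w u v) (fun u => w u v))).symm]
  have hsum : ∀ v : V,
      (∑ o : Option V, (if v ∈ A then (if o = some (nxt v) then w (nxt v) v else 0)
          else o.elim (1 - ∑ u : V, w u v) (fun u => w u v)))
        = if v ∈ A then w (nxt v) v else 1 := by
    intro v
    by_cases hv : v ∈ A
    · simp [hv, Fintype.sum_option]
    · simp only [if_neg hv]
      rw [Fintype.sum_option]
      show (1 - ∑ u : V, w u v) + ∑ u : V, w u v = 1
      ring
  rw [Finset.prod_congr rfl fun v _ => hsum v]
  calc (∏ v : V, if v ∈ A then w (nxt v) v else 1)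
      = ∏ v ∈ A, (if v ∈ A then w (nxt v) v else 1) :=
        (Finset.prod_subset A.subset_univ (fun v _ hv => if_neg hv)).symm
    _ = ∏ v ∈ A, w (nxt v) v := Finset.prod_congr rfl fun v hv => if_pos hv

private lemma sum_sample_chain (w : V → V → ℝ) {h : List V} (hnd : h.Nodup) :
    (∑ g : V → Option V, if h.Chain' (fun a b => g a = some b) then sampleProb w g else 0)
      = ((h.zip h.tail).map (fun pa => w pa.2 pa.1)).prod := by
  classical
  set z := h.zip h.tail with hz
  have hfst : z.map Prod.fst = h.dropLast := zip_tail_map_fst h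
  have hndz : (z.map Prod.fst).Nodup := by
    rw [hfst]; exact (List.dropLast_sublist h).nodup hnd
  have huniq : ∀ p ∈ z, ∀ q ∈ z, p.1 = q.1 → p = q := by
    intro p hp q hq hpq
    exact List.inj_on_of_nodup_map hndz hp hq hpq
  set nxt : V → V := fun v => if hv : ∃ b, (v, b) ∈ z then hv.choose else v with hnxt
  have hspec : ∀ p ∈ z, nxt p.1 = p.2 := by
    intro p hp
    have hv : ∃ b, (p.1, b) ∈ z := ⟨p.2, hp⟩
    have h1 : (p.1, hv.choose) ∈ z := hv.choose_spec
    have h2 : (p.1, hv.choose) = p := huniq _ h1 _ hp rfl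
    have h3 : nxt p.1 = hv.choose := by simp only [hnxt, dif_pos hv]
    rw [h3]
    exact congrArg Prod.snd h2
  have hiff : ∀ g : V → Option V,
      h.Chain' (fun a b => g a = some b) ↔
        ∀ v ∈ (z.map Prod.fst).toFinset, g v = some (nxt v) := by
    intro g
    rw [chain'_iff_zip]
    constructor
    · intro H v hv
      rw [List.mem_toFinset, List.mem_map] at hv
      obtain ⟨p, hp, rfl⟩ := hv
      rw [hspec p hp]
      exact H p hp
    · intro H p hp
      have hmem : p.1 ∈ (z.map Prod.fst).toFinset :=
        List.mem_toFinset.2 (List.mem_map.2 ⟨p, hp, rfl⟩)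
      have := H _ hmem
      rwa [hspec p hp] at this
  calc (∑ g : V → Option V, if h.Chain' (fun a b => g a = some b) then sampleProb w g else 0)
      = ∑ g : V → Option V,
          if (∀ v ∈ (z.map Prod.fst).toFinset, g v = some (nxt v)) then sampleProb w g else 0 :=
        Finset.sum_congr rfl fun g _ => if_congr (hiff g) rfl rfl
    _ = ∏ v ∈ (z.map Prod.fst).toFinset, w (nxt v) v := sum_sample_constrained w _ _
    _ = ((z.map Prod.fst).map (fun v => w (nxt v) v)).prod := List.prod_toFinset _ hndz
    _ = (z.map (fun p : V × V => w (nxt p.1) p.1)).prod := by rw [List.map_map]; rfl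
    _ = (z.map (fun pa : V × V => w pa.2 pa.1)).prod := by
        congr 1
        exact List.map_congr_left fun p hp => by rw [hspec p hp]

private lemma walkProb_eq (w : V → V → ℝ) (VI : Finset V) (p : V → ℝ) {h : List V}
    (hnd : h.Nodup) :
    walkProb w VI p h =
      ((h.zip h.tail).map (fun pa => w pa.2 pa.1)).prod *
        (∑ X ∈ VI.powerset,
          if (h ≠ [] ∧ ∀ v ∈ h, (v ∈ X ↔ h.getLast? = some v)) then seedProb VI p X else 0) := by
  unfold walkProb
  have key : ∀ (g : V → Option V) (X : Finset V),
      (if IsHSAW g X h then sampleProb w g * seedProb VI p X else 0)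
        = (if h.Chain' (fun a b => g a = some b) then sampleProb w g else 0) *
          (if (h ≠ [] ∧ ∀ v ∈ h, (v ∈ X ↔ h.getLast? = some v)) then seedProb VI p X else 0) := by
    intro g X
    have hiff : IsHSAW g X h ↔ h.Chain' (fun a b => g a = some b) ∧
        (h ≠ [] ∧ ∀ v ∈ h, (v ∈ X ↔ h.getLast? = some v)) := by
      unfold IsHSAW
      constructor
      · rintro ⟨h1, _, h3, h4⟩; exact ⟨h3, h1, h4⟩
      · rintro ⟨h3, h1, h4⟩; exact ⟨h1, hnd, h3, h4⟩
    by_cases h1 : h.Chain' (fun a b => g a = some b) <;>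
      by_cases h2 : (h ≠ [] ∧ ∀ v ∈ h, (v ∈ X ↔ h.getLast? = some v)) <;>
      simp [hiff, h1, h2]
  rw [Finset.sum_congr rfl fun g _ => Finset.sum_congr rfl fun X _ => key g X,
    ← Finset.sum_mul_sum, sum_sample_chain w hnd]

private lemma isHSAW_suffix {g : V → Option V} {X : Finset V} {l₁ l₂ : List V}
    (H : IsHSAW g X (l₁ ++ l₂)) (hne : l₂ ≠ []) : IsHSAW g X l₂ := by
  obtain ⟨-, hnd, hch, hcond⟩ := H
  refine ⟨hne, hnd.of_append_right, hch.right_of_append, ?_⟩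
  intro v hv
  rw [← List.getLast?_append_of_ne_nil l₁ hne]
  exact hcond v (List.mem_append_right l₁ hv)

private lemma isHSAW_last_mem {g : V → Option V} {X : Finset V} {l : List V}
    (H : IsHSAW g X l) : ∃ b, l.getLast? = some b ∧ b ∈ X := by
  obtain ⟨hne, _, _, hcond⟩ := H
  refine ⟨l.getLast hne, List.getLast?_eq_getLast hne, ?_⟩
  exact (hcond _ (List.getLast_mem hne)).2 (List.getLast?_eq_getLast hne)

private lemma chain'_reach {g : V → Option V} :
    ∀ {l : List V} (hne : l ≠ []), l.Chain' (fun a b => g a = some b) →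
      Relation.ReflTransGen (fun x y => g y = some x) (l.getLast hne) (l.head hne)
  | [], hne, _ => absurd rfl hne
  | [a], _, _ => by
    simp only [List.getLast_singleton, List.head_cons]
    exact Relation.ReflTransGen.refl
  | a :: b :: t, _, hch => by
    replace hch := List.isChain_cons_cons.1 hch
    have ih := chain'_reach (l := b :: t) (List.cons_ne_nil _ _) hch.2
    have hlast : (a :: b :: t).getLast (List.cons_ne_nil _ _)
        = (b :: t).getLast (List.cons_ne_nil _ _) := by
      simp [List.getLast_cons]
    rw [List.head_cons, hlast]
    exact ih.tail hch.1

private lemma isHSAW_head_reachable {g : V → Option V} {X : Finset V} {l : List V}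
    (H : IsHSAW g X l) (hne : l ≠ []) : Reachable g X (l.head hne) := by
  obtain ⟨b, hb, hbX⟩ := isHSAW_last_mem H
  have hlb : l.getLast hne = b := by
    rw [List.getLast?_eq_getLast hne] at hb
    exact Option.some_inj.1 hb
  exact ⟨b, hbX, hlb ▸ chain'_reach hne H.2.2.1⟩

private lemma isHSAW_unique {g : V → Option V} {X : Finset V} :
    ∀ (l₁ l₂ : List V), IsHSAW g X l₁ → IsHSAW g X l₂ → l₁.head? = l₂.head? → l₁ = l₂ := by
  intro l₁
  induction l₁ with
  | nil => intro l₂ H1 _ _; exact absurd rfl H1.1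
  | cons a t₁ ih =>
    intro l₂ H1 H2 hh
    cases l₂ with
    | nil => exact absurd rfl H2.1
    | cons a₂ t₂ =>
      simp only [List.head?_cons, Option.some_inj] at hh
      subst hh
      have hsingle : ∀ (t : List V), IsHSAW g X (a :: t) → a ∈ X → t = [] := by
        intro t H haX
        by_contra hne
        have hlast : (a :: t).getLast? = some a := (H.2.2.2 a List.mem_cons_self).1 haX
        rw [show a :: t = [a] ++ t from rfl, List.getLast?_append_of_ne_nil [a] hne] at hlast
        have hat : a ∈ t := by
          obtain ⟨h', he⟩ := List.mem_getLast?_eq_getLast (l := t) (x := a) hlast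
          exact he ▸ List.getLast_mem h'
        exact (List.nodup_cons.1 H.2.1).1 hat
      by_cases haX : a ∈ X
      · rw [hsingle t₁ H1 haX, hsingle t₂ H2 haX]
      · have hne : ∀ (t : List V), IsHSAW g X (a :: t) → t ≠ [] := by
          intro t H h
          subst h
          exact haX ((H.2.2.2 a List.mem_cons_self).2 rfl)
        have ht₁ := hne t₁ H1
        have ht₂ := hne t₂ H2
        have hc₁ : g a = some (t₁.head ht₁) := by
          have := (List.isChain_cons.1 H1.2.2.1).1
          exact this _ (List.head?_eq_head ht₁ ▸ rfl)
        have hc₂ : g a = some (t₂.head ht₂) := by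
          have := (List.isChain_cons.1 H2.2.2.1).1
          exact this _ (List.head?_eq_head ht₂ ▸ rfl)
        have hheads : t₁.head? = t₂.head? := by
          rw [List.head?_eq_head ht₁, List.head?_eq_head ht₂]
          exact hc₁.symm.trans hc₂
        have Ht₁ : IsHSAW g X t₁ := isHSAW_suffix (l₁ := [a]) H1 ht₁
        have Ht₂ : IsHSAW g X t₂ := isHSAW_suffix (l₁ := [a]) H2 ht₂
        rw [ih t₂ Ht₁ Ht₂ hheads]

private lemma isHSAW_single {g : V → Option V} {X : Finset V} {x : V} (hx : x ∈ X) :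
    IsHSAW g X [x] := by
  refine ⟨List.cons_ne_nil _ _, List.nodup_singleton x, List.isChain_singleton x, ?_⟩
  intro v hv
  rw [List.mem_singleton] at hv
  subst hv
  exact iff_of_true hx rfl

private lemma isHSAW_exists {g : V → Option V} {X : Finset V} {s v : V} (hs : s ∈ X)
    (hr : Relation.ReflTransGen (fun x y => g y = some x) s v) :
    ∃ l : List V, IsHSAW g X l ∧ l.head? = some v := by
  induction hr with
  | refl => exact ⟨[s], isHSAW_single hs, rfl⟩
  | @tail b c _ hstep ih =>
    obtain ⟨l, Hl, hhead⟩ := ih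
    by_cases hc : c ∈ X
    · exact ⟨[c], isHSAW_single hc, rfl⟩
    · by_cases hcl : c ∈ l
      · obtain ⟨s₁, s₂, rfl⟩ := List.append_of_mem hcl
        exact ⟨c :: s₂, isHSAW_suffix Hl (List.cons_ne_nil _ _), rfl⟩
      · have hlne : l ≠ [] := Hl.1
        refine ⟨c :: l, ⟨List.cons_ne_nil _ _, List.nodup_cons.2 ⟨hcl, Hl.2.1⟩, ?_, ?_⟩, rfl⟩
        · refine List.isChain_cons.2 ⟨?_, Hl.2.2.1⟩
          intro y hy
          rw [hhead] at hy
          rw [Option.mem_def, Option.some_inj] at hy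
          subst hy
          exact hstep
        · intro u hu
          have hlastc : (c :: l).getLast? = l.getLast? := by
            rw [show c :: l = [c] ++ l from rfl, List.getLast?_append_of_ne_nil [c] hlne]
          rcases List.mem_cons.1 hu with rfl | hul
          · refine iff_of_false hc ?_
            rw [hlastc]
            intro hlast
            obtain ⟨h', he⟩ := List.mem_getLast?_eq_getLast (l := l) (x := u) hlast
            exact hcl (he ▸ List.getLast_mem h')
          · rw [hlastc]
            exact Hl.2.2.2 u hul

private lemma HSAWset_finite (VI : Finset V) :
    {l : List V | l.Nodup ∧ ∃ v ∈ VI, l.getLast? = some v}.Finite := by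
  refine (List.finite_length_le V (Fintype.card V)).subset ?_
  intro l hl
  exact hl.1.length_le_card

private def HSAWlists (VI : Finset V) : Finset (List V) :=
  (HSAWset_finite VI).toFinset

private lemma mem_HSAWlists {VI : Finset V} {l : List V} :
    l ∈ HSAWlists VI ↔ l.Nodup ∧ ∃ v ∈ VI, l.getLast? = some v := by
  unfold HSAWlists
  exact Set.Finite.mem_toFinset _

private lemma card_isHSAW (g : V → Option V) (X VI : Finset V) (hX : X ⊆ VI) :
    ((HSAWlists VI).filter (fun l => IsHSAW g X l)).card
      = Nat.card {v : V // Reachable g X v} := by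
  classical
  rw [Nat.card_eq_fintype_card, Fintype.card_subtype]
  refine Finset.card_bij (fun l hl => l.head (Finset.mem_filter.1 hl).2.1) ?_ ?_ ?_
  · intro l hl
    exact Finset.mem_filter.2 ⟨Finset.mem_univ _,
      isHSAW_head_reachable (Finset.mem_filter.1 hl).2 _⟩
  · intro l₁ hl₁ l₂ hl₂ hheads
    refine isHSAW_unique l₁ l₂ (Finset.mem_filter.1 hl₁).2 (Finset.mem_filter.1 hl₂).2 ?_
    rw [List.head?_eq_head (Finset.mem_filter.1 hl₁).2.1,
      List.head?_eq_head (Finset.mem_filter.1 hl₂).2.1]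
    exact congrArg some hheads
  · intro v hv
    obtain ⟨s, hsX, hrtg⟩ := (Finset.mem_filter.1 hv).2
    obtain ⟨l, Hl, hhead⟩ := isHSAW_exists hsX hrtg
    obtain ⟨b, hb, hbX⟩ := isHSAW_last_mem Hl
    have hlmem : l ∈ (HSAWlists VI).filter (fun l => IsHSAW g X l) := by
      refine Finset.mem_filter.2 ⟨mem_HSAWlists.2 ⟨Hl.2.1, b, hX hbX, hb⟩, Hl⟩
    refine ⟨l, hlmem, ?_⟩
    have := List.head?_eq_head (l := l) Hl.1
    rw [this] at hhead
    exact Option.some_inj.1 hhead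

private lemma sum_walkProb (w : V → V → ℝ) (VI : Finset V) (p : V → ℝ) :
    ∑ l ∈ HSAWlists VI, walkProb w VI p l = influenceVI w VI p := by
  classical
  unfold walkProb influenceVI influence
  rw [Finset.sum_comm]
  rw [Finset.sum_congr rfl fun (g : V → Option V) _ => Finset.sum_comm]
  have inner : ∀ g : V → Option V, ∀ X ∈ VI.powerset,
      (∑ l ∈ HSAWlists VI, if IsHSAW g X l then sampleProb w g * seedProb VI p X else 0)
        = sampleProb w g *
            ((Nat.card {v : V // Reachable g X v} : ℝ) * seedProb VI p X) := by
    intro g X hX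
    rw [← Finset.sum_filter, Finset.sum_const,
      card_isHSAW g X VI (Finset.mem_powerset.1 hX), nsmul_eq_mul]
    ring
  rw [Finset.sum_congr rfl fun g _ => Finset.sum_congr rfl (inner g)]
  rw [Finset.sum_comm]
  refine Finset.sum_congr rfl fun X _ => ?_
  rw [Finset.mul_sum]
  exact Finset.sum_congr rfl fun g _ => by ring

private lemma walkProb_del_zero (w : V → V → ℝ) (VI : Finset V) (p : V → ℝ)
    (T : Finset (V × V)) {l : List V} (hnd : l.Nodup)
    (hhit : ∃ e ∈ T, e ∈ walkEdges l) :
    walkProb (fun u v => if (u, v) ∈ T then 0 else w u v) VI p l = 0 := by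
  rw [walkProb_eq _ _ _ hnd]
  obtain ⟨e, heT, hew⟩ := hhit
  unfold walkEdges at hew
  rw [List.mem_map] at hew
  obtain ⟨pa, hpa, rfl⟩ := hew
  have h0 : (0 : ℝ) ∈ (l.zip l.tail).map
      (fun pa : V × V => if (pa.2, pa.1) ∈ T then (0:ℝ) else w pa.2 pa.1) := by
    rw [List.mem_map]
    exact ⟨pa, hpa, if_pos heT⟩
  rw [show ((l.zip l.tail).map
      (fun pa : V × V => (fun u v => if (u, v) ∈ T then (0:ℝ) else w u v) pa.2 pa.1))
      = (l.zip l.tail).map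
        (fun pa : V × V => if (pa.2, pa.1) ∈ T then (0:ℝ) else w pa.2 pa.1) from rfl]
  rw [List.prod_eq_zero h0, zero_mul]

private lemma walkProb_del_eq (w : V → V → ℝ) (VI : Finset V) (p : V → ℝ)
    (T : Finset (V × V)) {l : List V} (hnd : l.Nodup)
    (hmiss : ¬ ∃ e ∈ T, e ∈ walkEdges l) :
    walkProb (fun u v => if (u, v) ∈ T then 0 else w u v) VI p l = walkProb w VI p l := by
  rw [walkProb_eq _ _ _ hnd, walkProb_eq _ _ _ hnd]
  congr 1
  refine congrArg List.prod (List.map_congr_left fun pa hpa => ?_)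
  have hnT : (pa.2, pa.1) ∉ T := by
    intro hmem
    refine hmiss ⟨(pa.2, pa.1), hmem, ?_⟩
    unfold walkEdges
    exact List.mem_map.2 ⟨pa, hpa, rfl⟩
  simp only [if_neg hnT]

private lemma tsum_set_finite {α : Type*} {s : Set α} (hs : s.Finite) (f : α → ℝ) :
    ∑' (x : s), f x = ∑ x ∈ hs.toFinset, f x := by
  haveI := hs.fintype
  rw [tsum_fintype, ← Finset.sum_coe_sort hs.toFinset f]
  exact Fintype.sum_equiv (Equiv.subtypeEquivRight fun x => (hs.mem_toFinset (a := x)).symm)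
    _ _ fun x => rfl

end Aux
/-- Theorem 2 (edge version): for a stochastic graph `(V, E, w)`, a
probabilistic suspect set `(VI, p)` and an edge set `T ⊆ E`,
(i) the total walk probability of all hitting self-avoiding walks (walks of
pairwise distinct nodes ending at a node of `VI`) equals `I_𝒢(𝒱_I)`;
(ii) the total walk probability of those walks whose edge set intersects `T`
equals the influence suspension `D(T, 𝒱_I) = I_𝒢(𝒱_I) − I_{𝒢∖T}(𝒱_I)`;
(iii) hence if `I_𝒢(𝒱_I) > 0` then `D(T, 𝒱_I)` equals `I_𝒢(𝒱_I)` times the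
probability that a random HSAW (drawn proportionally to walk probability)
is interdicted by `T`. -/
theorem stmt_0 {V : Type} [Fintype V] [DecidableEq V]
    (E : Finset (V × V)) (w : V → V → ℝ)
    (hw01 : ∀ u v, 0 ≤ w u v ∧ w u v ≤ 1)
    (hwE : ∀ u v, (u, v) ∉ E → w u v = 0)
    (hwsum : ∀ v, ∑ u : V, w u v ≤ 1)
    (VI : Finset V) (p : V → ℝ) (hp : ∀ v ∈ VI, 0 ≤ p v ∧ p v ≤ 1)
    (T : Finset (V × V)) (hT : T ⊆ E) :
    (∑' h : {l : List V // l.Nodup ∧ ∃ v ∈ VI, l.getLast? = some v},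
        walkProb w VI p h.val) = influenceVI w VI p ∧
    (∑' h : {l : List V // (l.Nodup ∧ ∃ v ∈ VI, l.getLast? = some v) ∧
          ∃ e ∈ T, e ∈ walkEdges l},
        walkProb w VI p h.val)
      = influenceVI w VI p
        - influenceVI (fun u v => if (u, v) ∈ T then 0 else w u v) VI p ∧
    (0 < influenceVI w VI p →
      influenceVI w VI p
          - influenceVI (fun u v => if (u, v) ∈ T then 0 else w u v) VI p
        = influenceVI w VI p *
          ((∑' h : {l : List V // (l.Nodup ∧ ∃ v ∈ VI, l.getLast? = some v) ∧
                ∃ e ∈ T, e ∈ walkEdges l},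
              walkProb w VI p h.val) /
            (∑' h : {l : List V // l.Nodup ∧ ∃ v ∈ VI, l.getLast? = some v},
              walkProb w VI p h.val))) := by
  classical
  set w' : V → V → ℝ := fun u v => if (u, v) ∈ T then 0 else w u v with hw'
  have e1 : (∑' h : {l : List V // l.Nodup ∧ ∃ v ∈ VI, l.getLast? = some v},
      walkProb w VI p h.val) = influenceVI w VI p :=
    (tsum_set_finite (HSAWset_finite VI) (walkProb w VI p)).trans (sum_walkProb w VI p)
  have hfin2 : {l : List V | (l.Nodup ∧ ∃ v ∈ VI, l.getLast? = some v) ∧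
      ∃ e ∈ T, e ∈ walkEdges l}.Finite :=
    (HSAWset_finite VI).subset fun l hl => hl.1
  have htoF2 : hfin2.toFinset
      = (HSAWlists VI).filter (fun l => ∃ e ∈ T, e ∈ walkEdges l) := by
    ext l
    simp only [Set.Finite.mem_toFinset, Set.mem_setOf_eq, Finset.mem_filter, mem_HSAWlists]
  have e2 : (∑' h : {l : List V // (l.Nodup ∧ ∃ v ∈ VI, l.getLast? = some v) ∧
        ∃ e ∈ T, e ∈ walkEdges l}, walkProb w VI p h.val)
      = influenceVI w VI p - influenceVI w' VI p := by
    have ht : (∑' h : {l : List V // (l.Nodup ∧ ∃ v ∈ VI, l.getLast? = some v) ∧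
          ∃ e ∈ T, e ∈ walkEdges l}, walkProb w VI p h.val)
        = ∑ l ∈ (HSAWlists VI).filter (fun l => ∃ e ∈ T, e ∈ walkEdges l),
            walkProb w VI p l := by
      have h0 := tsum_set_finite hfin2 (walkProb w VI p)
      rw [htoF2] at h0
      exact h0
    have hA : ∀ l ∈ (HSAWlists VI).filter (fun l => ∃ e ∈ T, e ∈ walkEdges l),
        walkProb w VI p l - walkProb w' VI p l = walkProb w VI p l := by
      intro l hl
      rw [walkProb_del_zero w VI p T (mem_HSAWlists.1 (Finset.mem_filter.1 hl).1).1
        (Finset.mem_filter.1 hl).2, sub_zero]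
    have hB : ∀ l ∈ (HSAWlists VI).filter (fun l => ¬ ∃ e ∈ T, e ∈ walkEdges l),
        walkProb w VI p l - walkProb w' VI p l = 0 := by
      intro l hl
      rw [walkProb_del_eq w VI p T (mem_HSAWlists.1 (Finset.mem_filter.1 hl).1).1
        (Finset.mem_filter.1 hl).2, sub_self]
    have hsplit := Finset.sum_filter_add_sum_filter_not (HSAWlists VI)
      (fun l => ∃ e ∈ T, e ∈ walkEdges l)
      (fun l => walkProb w VI p l - walkProb w' VI p l)
    have hmain : ∑ l ∈ HSAWlists VI, (walkProb w VI p l - walkProb w' VI p l)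
        = ∑ l ∈ (HSAWlists VI).filter (fun l => ∃ e ∈ T, e ∈ walkEdges l),
            walkProb w VI p l := by
      rw [← hsplit, Finset.sum_congr rfl hA, Finset.sum_congr rfl hB,
        Finset.sum_const_zero, add_zero]
    rw [ht, ← hmain, Finset.sum_sub_distrib, sum_walkProb, sum_walkProb]
  refine ⟨e1, e2, fun hI => ?_⟩
  rw [e1, e2]
  rw [mul_comm, div_mul_cancel₀ _ (ne_of_gt hI)]
end
end

section
/- For every stochastic graph 𝒢 = (V, E, w) and every probabilistic suspect set 𝒱_I = (V_I, p), the edge influence-suspension function T ↦ D(T, 𝒱_I) is monotone, i.e. D(T, 𝒱_I) ≤ D(T', 𝒱_I) whenever T ⊆ T' ⊆ E, and submodular, i.e. D(T ∪ {e}, 𝒱_I) − D(T, 𝒱_I) ≥ D(T' ∪ {e}, 𝒱_I) − D(T', 𝒱_I) whenever T ⊆ T' ⊆ E and e ∈ E ∖ T'. -/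
noncomputable section
open scoped Classical

/-- Influence suspension of an edge set `T`:
`D(T, 𝒱_I) = I_𝒢(𝒱_I) − I_{𝒢∖T}(𝒱_I)`, where `𝒢∖T` zeroes out the edges of `T`. -/
def suspension {V : Type} [Fintype V] [DecidableEq V]
    (w : V → V → ℝ) (VI : Finset V) (p : V → ℝ) (T : Finset (V × V)) : ℝ :=
  influenceVI w VI p - influenceVI (fun u v => if (u, v) ∈ T then 0 else w u v) VI p

namespace StmtAux

variable {V : Type} [Fintype V] [DecidableEq V]

/-- Kill (delete) the edges of `T` in the live-edge sample `g`. -/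
def kill (T : Finset (V × V)) (g : V → Option V) : V → Option V :=
  fun v => (g v).bind (fun u => if (u, v) ∈ T then none else some u)

lemma kill_eq_some {T : Finset (V × V)} {g : V → Option V} {u v : V} :
    kill T g v = some u ↔ g v = some u ∧ (u, v) ∉ T := by
  simp only [kill, Option.bind_eq_some_iff]
  constructor
  · rintro ⟨a, ha, hif⟩
    by_cases hm : (a, v) ∈ T
    · rw [if_pos hm] at hif; cases hif
    · rw [if_neg hm] at hif
      obtain rfl := Option.some.inj hif
      exact ⟨ha, hm⟩
  · rintro ⟨ha, hm⟩
    exact ⟨u, ha, by rw [if_neg hm]⟩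

lemma kill_idem (T : Finset (V × V)) (g : V → Option V) :
    kill T (kill T g) = kill T g := by
  funext v
  simp only [kill]
  cases h : g v with
  | none => simp
  | some a =>
    simp only [Option.bind_some]
    by_cases hT : (a, v) ∈ T
    · simp [hT]
    · simp [hT]

/-- Reachability in the killed sample, as a reflexive-transitive closure of an
edge relation avoiding `T`. -/
lemma reach_kill_iff {T : Finset (V × V)} {g : V → Option V} {X : Finset V} {v : V} :
    Reachable (kill T g) X v ↔
      ∃ s ∈ X, Relation.ReflTransGen (fun x y => g y = some x ∧ (x, y) ∉ T) s v := by
  have hrel : (fun x y => kill T g y = some x)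
      = fun x y => g y = some x ∧ (x, y) ∉ T := by
    funext x y; exact propext kill_eq_some
  unfold Reachable
  rw [hrel]

/-- Monotonicity of reachability: fewer killed edges, more reachability. -/
lemma reach_mono {T T' : Finset (V × V)} (hTT : T ⊆ T') {g : V → Option V}
    {X : Finset V} {v : V} (h : Reachable (kill T' g) X v) : Reachable (kill T g) X v := by
  rw [reach_kill_iff] at h ⊢
  obtain ⟨s, hs, hr⟩ := h
  exact ⟨s, hs, Relation.ReflTransGen.mono (p := fun x y => g y = some x ∧ (x, y) ∉ T) (fun x y hxy => ⟨hxy.1, fun hm => hxy.2 (hTT hm)⟩) s v hr⟩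

/-- Key lemma: since each node has at most one incoming live edge, reachability
avoiding `T'` together with reachability avoiding `T ∪ {e}` (for `T ⊆ T'`)
implies reachability avoiding `T' ∪ {e}`. -/
lemma reach_key {T T' : Finset (V × V)} (hTT : T ⊆ T') {e : V × V} {g : V → Option V}
    {X : Finset V} {v : V}
    (h' : Reachable (kill T' g) X v) (h : Reachable (kill (T ∪ {e}) g) X v) :
    Reachable (kill (T' ∪ {e}) g) X v := by
  rw [reach_kill_iff] at h' h ⊢
  obtain ⟨s, hs, hr⟩ := h
  induction hr with
  | refl => exact ⟨s, hs, Relation.ReflTransGen.refl⟩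
  | @tail b c hab hbc ih =>
    obtain ⟨s', hs', hr'⟩ := h'
    rcases hr'.cases_tail with hcs | ⟨b', hb', hstep⟩
    · subst hcs
      exact ⟨c, hs', Relation.ReflTransGen.refl⟩
    · have hbb : b' = b := Option.some.inj (hstep.1.symm.trans hbc.1)
      subst hbb
      obtain ⟨t, ht, htr⟩ := ih ⟨s', hs', hb'⟩
      refine ⟨t, ht, htr.tail ⟨hbc.1, ?_⟩⟩
      intro hm
      rcases Finset.mem_union.mp hm with hm1 | hm2
      · exact hstep.2 hm1
      · exact hbc.2 (Finset.mem_union_right _ hm2)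

/-- Real-valued reach count. -/
def N (g : V → Option V) (X : Finset V) : ℝ :=
  ∑ v : V, (if Reachable g X v then (1 : ℝ) else 0)

lemma natCard_eq_N (g : V → Option V) (X : Finset V) :
    (Nat.card {v : V // Reachable g X v} : ℝ) = N g X := by
  rw [Nat.card_eq_fintype_card, Fintype.card_subtype, N, Finset.sum_boole]

lemma N_mono {T T' : Finset (V × V)} (hTT : T ⊆ T') (g : V → Option V) (X : Finset V) :
    N (kill T' g) X ≤ N (kill T g) X := by
  apply Finset.sum_le_sum
  intro v _
  by_cases h : Reachable (kill T' g) X v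
  · rw [if_pos h, if_pos (reach_mono hTT h)]
  · rw [if_neg h]
    split <;> norm_num

lemma N_submod {T T' : Finset (V × V)} (hTT : T ⊆ T') (e : V × V)
    (g : V → Option V) (X : Finset V) :
    N (kill T' g) X - N (kill (T' ∪ {e}) g) X
      ≤ N (kill T g) X - N (kill (T ∪ {e}) g) X := by
  unfold N
  rw [← Finset.sum_sub_distrib, ← Finset.sum_sub_distrib]
  apply Finset.sum_le_sum
  intro v _
  by_cases hT' : Reachable (kill T' g) X v
  · by_cases hTe : Reachable (kill (T ∪ {e}) g) X v
    · have hT'e : Reachable (kill (T' ∪ {e}) g) X v := reach_key hTT hT' hTe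
      have hT : Reachable (kill T g) X v := reach_mono hTT hT'
      rw [if_pos hT', if_pos hTe, if_pos hT'e, if_pos hT]
    · have hT'e : ¬ Reachable (kill (T' ∪ {e}) g) X v := by
        intro hc
        exact hTe (reach_mono (Finset.union_subset_union hTT (le_refl _)) hc)
      have hT : Reachable (kill T g) X v := reach_mono hTT hT'
      rw [if_pos hT', if_neg hTe, if_neg hT'e, if_pos hT]
  · have hT'e : ¬ Reachable (kill (T' ∪ {e}) g) X v := by
      intro hc; exact hT' (reach_mono Finset.subset_union_left hc)
    rw [if_neg hT', if_neg hT'e]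
    have hTTe : Reachable (kill (T ∪ {e}) g) X v → Reachable (kill T g) X v :=
      reach_mono Finset.subset_union_left
    by_cases hTe : Reachable (kill (T ∪ {e}) g) X v
    · rw [if_pos hTe, if_pos (hTTe hTe)]; norm_num
    · rw [if_neg hTe]
      split <;> norm_num

lemma sampleProb_nonneg {w : V → V → ℝ} (hw : ∀ u v, 0 ≤ w u v)
    (hs : ∀ v, ∑ u : V, w u v ≤ 1) (g : V → Option V) : 0 ≤ sampleProb w g := by
  apply Finset.prod_nonneg
  intro v _
  cases h : g v with
  | none => simpa using sub_nonneg.mpr (hs v)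
  | some u => simpa using hw u v

lemma seedProb_nonneg {VI : Finset V} {p : V → ℝ} (hp : ∀ v ∈ VI, 0 ≤ p v ∧ p v ≤ 1)
    {X : Finset V} (hX : X ⊆ VI) : 0 ≤ seedProb VI p X := by
  apply mul_nonneg
  · exact Finset.prod_nonneg fun u hu => (hp u (hX hu)).1
  · exact Finset.prod_nonneg fun v hv =>
      sub_nonneg.mpr (hp v (Finset.mem_sdiff.mp hv).1).2

/-- The fiber-sum (pushforward) identity for `sampleProb`. -/
lemma fiber_sum (w : V → V → ℝ) (T : Finset (V × V)) (g' : V → Option V)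
    (hg' : kill T g' = g') :
    ∑ g ∈ Finset.univ.filter (fun g => kill T g = g'), sampleProb w g
      = sampleProb (fun u v => if (u, v) ∈ T then 0 else w u v) g' := by
  classical
  set F : (v : V) → Option V → ℝ := fun v o =>
    if (o.bind fun u => if (u, v) ∈ T then none else some u) = g' v then
      o.elim (1 - ∑ u : V, w u v) (fun u => w u v) else 0 with hF
  have step1 : ∀ g : V → Option V,
      (if kill T g = g' then sampleProb w g else 0) = ∏ v : V, F v (g v) := by
    intro g
    by_cases hg : kill T g = g'
    · rw [if_pos hg]
      unfold sampleProb
      apply Finset.prod_congr rfl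
      intro v _
      have hv : (g v).bind (fun u => if (u, v) ∈ T then none else some u) = g' v :=
        congrFun hg v
      rw [hF]; simp only [if_pos hv]
    · rw [if_neg hg]
      obtain ⟨v, hv⟩ := Function.ne_iff.mp (fun hc => hg (funext fun x => congrFun hc x))
      refine (Finset.prod_eq_zero (Finset.mem_univ v) ?_).symm
      exact if_neg hv
  have step2 : ∀ v : V, ∑ o : Option V, F v o
      = (g' v).elim (1 - ∑ u : V, (if (u, v) ∈ T then 0 else w u v))
          (fun u => if (u, v) ∈ T then 0 else w u v) := by
    intro v
    have hg'v : (g' v).bind (fun u => if (u, v) ∈ T then none else some u) = g' v :=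
      congrFun hg' v
    rw [Fintype.sum_option]
    cases hval : g' v with
    | some u =>
      rw [hval] at hg'v
      simp only [Option.bind_some] at hg'v
      have huT : (u, v) ∉ T := by
        by_cases hm : (u, v) ∈ T
        · rw [if_pos hm] at hg'v; exact absurd hg'v (by simp)
        · exact hm
      have hFnone : F v none = 0 := by
        rw [hF]; simp only [Option.bind_none]
        rw [if_neg (by rw [hval]; simp)]
      have hFsome : ∀ a : V, F v (some a) = if a = u then w u v else 0 := by
        intro a
        rw [hF]; simp only [Option.bind_some, hval]
        by_cases hmT : (a, v) ∈ T
        · rw [if_pos hmT, if_neg (by simp)]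
          by_cases hau : a = u
          · subst hau; exact absurd hmT huT
          · rw [if_neg hau]
        · rw [if_neg hmT]
          by_cases hau : a = u
          · subst hau; rw [if_pos rfl, if_pos rfl]; simp
          · rw [if_neg (by simpa using hau), if_neg hau]
      rw [hFnone, zero_add]
      simp only [hFsome]
      rw [Finset.sum_ite_eq' Finset.univ u (fun _ => w u v)]
      simp [huT, hval]
    | none =>
      have hFnone : F v none = 1 - ∑ u : V, w u v := by
        rw [hF]; simp only [Option.bind_none, hval]
        simp
      have hFsome : ∀ a : V, F v (some a) = if (a, v) ∈ T then w a v else 0 := by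
        intro a
        rw [hF]; simp only [Option.bind_some, hval]
        by_cases hmT : (a, v) ∈ T
        · rw [if_pos hmT, if_pos rfl, if_pos hmT]
          rfl
        · rw [if_neg hmT, if_neg (by simp), if_neg hmT]
      rw [hFnone]
      simp only [hFsome, hval]
      have hsplit : ∑ u : V, w u v
          = (∑ u : V, (if (u, v) ∈ T then w u v else 0))
            + ∑ u : V, (if (u, v) ∈ T then 0 else w u v) := by
        rw [← Finset.sum_add_distrib]
        apply Finset.sum_congr rfl
        intro u _
        split_ifs <;> ring
      simp only [Option.elim]
      linarith
  calc ∑ g ∈ Finset.univ.filter (fun g => kill T g = g'), sampleProb w g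
      = ∑ g : V → Option V, (if kill T g = g' then sampleProb w g else 0) := by
        rw [Finset.sum_filter]
    _ = ∑ g : V → Option V, ∏ v : V, F v (g v) := by
        exact Finset.sum_congr rfl fun g _ => step1 g
    _ = ∏ v : V, ∑ o : Option V, F v o := (Fintype.prod_sum F).symm
    _ = ∏ v : V, (g' v).elim (1 - ∑ u : V, (if (u, v) ∈ T then 0 else w u v))
          (fun u => if (u, v) ∈ T then 0 else w u v) := by
        exact Finset.prod_congr rfl fun v _ => step2 v
    _ = sampleProb (fun u v => if (u, v) ∈ T then 0 else w u v) g' := rfl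

lemma sampleProb_killed_zero (w : V → V → ℝ) (T : Finset (V × V)) (g' : V → Option V)
    (hg' : kill T g' ≠ g') :
    sampleProb (fun u v => if (u, v) ∈ T then 0 else w u v) g' = 0 := by
  obtain ⟨v, hv⟩ := Function.ne_iff.mp hg'
  apply Finset.prod_eq_zero (Finset.mem_univ v)
  cases hval : g' v with
  | none =>
    exfalso; apply hv
    simp only [kill, hval]
    rfl
  | some u =>
    have hmT : (u, v) ∈ T := by
      by_contra hm
      apply hv
      simp only [kill, hval, Option.bind_some, if_neg hm]
    simp [hval, hmT]

/-- Pushforward identity: influence under edge-deleted weights equals the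
expectation of the reach count of the killed sample under the original weights. -/
lemma influence_kill (w : V → V → ℝ) (T : Finset (V × V)) (X : Finset V) :
    influence (fun u v => if (u, v) ∈ T then 0 else w u v) X
      = ∑ g : V → Option V, sampleProb w g * N (kill T g) X := by
  classical
  have hmaps : ∀ g ∈ (Finset.univ : Finset (V → Option V)),
      kill T g ∈ (Finset.univ : Finset (V → Option V)) := fun g _ => Finset.mem_univ _
  rw [← Finset.sum_fiberwise_of_maps_to hmaps (fun g => sampleProb w g * N (kill T g) X)]
  unfold influence
  apply Finset.sum_congr rfl
  intro g' _
  rw [natCard_eq_N]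
  have hfib : ∀ g ∈ Finset.univ.filter (fun g => kill T g = g'),
      sampleProb w g * N (kill T g) X = sampleProb w g * N g' X := by
    intro g hg
    rw [(Finset.mem_filter.mp hg).2]
  rw [Finset.sum_congr rfl hfib, ← Finset.sum_mul]
  by_cases hg' : kill T g' = g'
  · rw [fiber_sum w T g' hg']
  · have hempty : Finset.univ.filter (fun g => kill T g = g') = ∅ := by
      apply Finset.filter_eq_empty_iff.mpr
      intro g _ hc
      exact hg' (by rw [← hc, kill_idem])
    rw [hempty, sampleProb_killed_zero w T g' hg']
    simp

/-- The suspension as a nonnegatively-weighted sum of reach-count differences. -/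
lemma suspension_eq (w : V → V → ℝ) (VI : Finset V) (p : V → ℝ) (T : Finset (V × V)) :
    suspension w VI p T
      = ∑ X ∈ VI.powerset, seedProb VI p X *
          ∑ g : V → Option V, sampleProb w g * (N g X - N (kill T g) X) := by
  unfold suspension influenceVI
  rw [← Finset.sum_sub_distrib]
  apply Finset.sum_congr rfl
  intro X _
  rw [← mul_sub]
  congr 1
  rw [influence_kill w T X]
  unfold influence
  rw [← Finset.sum_sub_distrib]
  apply Finset.sum_congr rfl
  intro g _
  rw [natCard_eq_N]
  ring

/-- Difference of suspensions. -/
lemma susp_diff (w : V → V → ℝ) (VI : Finset V) (p : V → ℝ) (T U : Finset (V × V)) :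
    suspension w VI p U - suspension w VI p T
      = ∑ X ∈ VI.powerset, seedProb VI p X *
          ∑ g : V → Option V, sampleProb w g * (N (kill T g) X - N (kill U g) X) := by
  rw [suspension_eq w VI p U, suspension_eq w VI p T, ← Finset.sum_sub_distrib]
  apply Finset.sum_congr rfl
  intro X _
  rw [← mul_sub]
  congr 1
  rw [← Finset.sum_sub_distrib]
  apply Finset.sum_congr rfl
  intro g _
  ring

end StmtAux

open StmtAux in
/-- Corollary 3: the edge influence-suspension function `T ↦ D(T, 𝒱_I)` is
monotone and submodular. -/
theorem stmt_1 {V : Type} [Fintype V] [DecidableEq V]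
    (E : Finset (V × V)) (w : V → V → ℝ)
    (hw01 : ∀ u v, 0 ≤ w u v ∧ w u v ≤ 1)
    (hwE : ∀ u v, (u, v) ∉ E → w u v = 0)
    (hwsum : ∀ v, ∑ u : V, w u v ≤ 1)
    (VI : Finset V) (p : V → ℝ) (hp : ∀ v ∈ VI, 0 ≤ p v ∧ p v ≤ 1) :
    (∀ T T' : Finset (V × V), T ⊆ T' → T' ⊆ E →
      suspension w VI p T ≤ suspension w VI p T') ∧
    (∀ T T' : Finset (V × V), T ⊆ T' → T' ⊆ E → ∀ e ∈ E \ T',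
      suspension w VI p (T' ∪ {e}) - suspension w VI p T'
        ≤ suspension w VI p (T ∪ {e}) - suspension w VI p T) := by
  have hwnn : ∀ u v, 0 ≤ w u v := fun u v => (hw01 u v).1
  constructor
  · intro T T' hTT _
    rw [← sub_nonneg, susp_diff w VI p T T']
    apply Finset.sum_nonneg
    intro X hX
    apply mul_nonneg (seedProb_nonneg hp (Finset.mem_powerset.mp hX))
    apply Finset.sum_nonneg
    intro g _
    apply mul_nonneg (sampleProb_nonneg hwnn hwsum g)
    exact sub_nonneg.mpr (N_mono hTT g X)
  · intro T T' hTT _ e _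
    rw [susp_diff w VI p T' (T' ∪ {e}), susp_diff w VI p T (T ∪ {e})]
    apply Finset.sum_le_sum
    intro X hX
    apply mul_le_mul_of_nonneg_left _ (seedProb_nonneg hp (Finset.mem_powerset.mp hX))
    apply Finset.sum_le_sum
    intro g _
    apply mul_le_mul_of_nonneg_left _ (sampleProb_nonneg hwnn hwsum g)
    exact N_submod hTT e g X
end
end

section
/- For every stochastic graph 𝒢 = (V, E, w), every probabilistic suspect set 𝒱_I = (V_I, p), and every node set S ⊆ V, the node influence suspension of S equals the total walk probability of the hitting self-avoiding walks whose node set intersects S; precisely, D⁽ⁿ⁾(S, 𝒱_I) equals the sum of Pr[h is an HSAW of (g, X)] over all finite sequences h of pairwise distinct nodes ending at a node of V_I whose node set intersects S. Consequently, if I_𝒢(𝒱_I) > 0 then D⁽ⁿ⁾(S, 𝒱_I) = I_𝒢(𝒱_I) · Pr[S intersects the node set of a random HSAW], where a random HSAW is drawn with probability proportional to its walk probability. -/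
noncomputable section
open scoped Classical

/-- Expected influence spread of `(VI, p)` in the graph obtained by deleting the
nodes of `S` together with all incident edges: edges touching `S` get weight `0`
and seeds in `S` are removed. -/
def influenceVIDelNodes {V : Type} [Fintype V] [DecidableEq V]
    (w : V → V → ℝ) (VI : Finset V) (p : V → ℝ) (S : Finset V) : ℝ :=
  ∑ X ∈ VI.powerset, seedProb VI p X *
    influence (fun u v => if u ∈ S ∨ v ∈ S then 0 else w u v) (X \ S)

section AuxHSAW
set_option linter.unusedSectionVars false
set_option linter.unusedVariables false

variable {V : Type} [Fintype V] [DecidableEq V]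

lemma nodup_finite : {l : List V | l.Nodup}.Finite := by
  apply Set.Finite.subset (List.finite_length_le V (Fintype.card V))
  intro l hl
  exact List.Nodup.length_le_card hl

def HLfin (V : Type) [Fintype V] [DecidableEq V] : Finset (List V) :=
  nodup_finite.toFinset

lemma mem_HLfin {l : List V} : l ∈ HLfin V ↔ l.Nodup := by
  simp [HLfin, Set.Finite.mem_toFinset]

-- nodup list with head = last must be singleton
lemma singleton_of_getLast?_head {a : V} {t : List V} (hnd : (a :: t).Nodup)
    (hl : (a :: t).getLast? = some a) : t = [] := by
  cases t with
  | nil => rfl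
  | cons b t' =>
    exfalso
    have h1 : (a :: b :: t').getLast? = (b :: t').getLast? := List.getLast?_cons_cons
    rw [h1, List.getLast?_eq_getLast (l := b :: t') (by simp)] at hl
    have : (b :: t').getLast (by simp) ∈ (b :: t') := List.getLast_mem _
    rw [Option.some_inj] at hl
    rw [hl] at this
    exact (List.nodup_cons.mp hnd).1 this

-- tail of an HSAW is an HSAW (if nonempty)
lemma IsHSAW.tail {g : V → Option V} {X : Finset V} {a : V} {t : List V}
    (hh : IsHSAW g X (a :: t)) (ht : t ≠ []) : IsHSAW g X t := by
  obtain ⟨-, hnd, hc, hx⟩ := hh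
  refine ⟨ht, (List.nodup_cons.mp hnd).2, hc.tail, ?_⟩
  intro v hv
  have := hx v (List.mem_cons_of_mem a hv)
  rwa [show (a :: t).getLast? = t.getLast? from ?_] at this
  cases t with
  | nil => exact absurd rfl ht
  | cons b t' => exact List.getLast?_cons_cons

-- generic: getLast? of cons when tail nonempty
lemma getLast?_cons_ne {a : V} {t : List V} (ht : t ≠ []) :
    (a :: t).getLast? = t.getLast? := by
  cases t with
  | nil => exact absurd rfl ht
  | cons b t' => exact List.getLast?_cons_cons

-- uniqueness of HSAW with given head
lemma hsaw_unique {g : V → Option V} {X : Finset V} :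
    ∀ (h₁ h₂ : List V), IsHSAW g X h₁ → IsHSAW g X h₂ → h₁.head? = h₂.head? → h₁ = h₂ := by
  intro h₁
  induction h₁ with
  | nil => intro h₂ hh₁ _ _; exact absurd rfl hh₁.1
  | cons a t₁ ih =>
    intro h₂ hh₁ hh₂ hhd
    cases h₂ with
    | nil => exact absurd rfl hh₂.1
    | cons a₂ t₂ =>
      simp only [List.head?_cons, Option.some_inj] at hhd
      subst hhd
      by_cases haX : a ∈ X
      · have e₁ : t₁ = [] := singleton_of_getLast?_head hh₁.2.1
          ((hh₁.2.2.2 a (by simp)).mp haX)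
        have e₂ : t₂ = [] := singleton_of_getLast?_head hh₂.2.1
          ((hh₂.2.2.2 a (by simp)).mp haX)
        rw [e₁, e₂]
      · have ht₁ : t₁ ≠ [] := by
          intro e; subst e
          exact haX ((hh₁.2.2.2 a (by simp)).mpr (by simp))
        have ht₂ : t₂ ≠ [] := by
          intro e; subst e
          exact haX ((hh₂.2.2.2 a (by simp)).mpr (by simp))
        have hc₁ := (List.isChain_cons.mp hh₁.2.2.1).1
        have hc₂ := (List.isChain_cons.mp hh₂.2.2.1).1
        have hhd' : t₁.head? = t₂.head? := by
          cases t₁ with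
          | nil => exact absurd rfl ht₁
          | cons b₁ s₁ =>
            cases t₂ with
            | nil => exact absurd rfl ht₂
            | cons b₂ s₂ =>
              have e₁ := hc₁ b₁ (by simp)
              have e₂ := hc₂ b₂ (by simp)
              rw [e₁] at e₂
              simp only [Option.some_inj] at e₂
              simp [e₂]
        have := ih t₂ (hh₁.tail ht₁) (hh₂.tail ht₂) hhd'
        rw [this]

-- head of HSAW is reachable
lemma hsaw_head_reachable {g : V → Option V} {X : Finset V} :
    ∀ (h : List V) (v : V), IsHSAW g X h → h.head? = some v → Reachable g X v := by
  intro h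
  induction h with
  | nil => intro v hh; exact absurd rfl hh.1
  | cons a t ih =>
    intro v hh hv
    simp only [List.head?_cons, Option.some_inj] at hv
    subst hv
    cases t with
    | nil =>
      have : a ∈ X := (hh.2.2.2 a (by simp)).mpr (by simp)
      exact ⟨a, this, Relation.ReflTransGen.refl⟩
    | cons b s =>
      obtain ⟨x, hx, hrtg⟩ := ih b (hh.tail (by simp)) (by simp)
      refine ⟨x, hx, hrtg.tail ?_⟩
      simpa using (List.isChain_cons_cons.mp hh.2.2.1).1

-- a member of an HSAW starts a sub-HSAW
lemma hsaw_suffix {g : V → Option V} {X : Finset V} :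
    ∀ (h : List V), IsHSAW g X h → ∀ v ∈ h, ∃ h', IsHSAW g X h' ∧ h'.head? = some v := by
  intro h
  induction h with
  | nil => intro _ _ hv; simp at hv
  | cons a t ih =>
    intro hh v hv
    rcases List.mem_cons.mp hv with rfl | hvt
    · exact ⟨v :: t, hh, by simp⟩
    · have ht : t ≠ [] := by rintro rfl; simp at hvt
      exact ih (hh.tail ht) v hvt

-- existence of HSAW with given reachable head
lemma hsaw_exists {g : V → Option V} {X : Finset V} {v : V} (hr : Reachable g X v) :
    ∃ h, IsHSAW g X h ∧ h.head? = some v := by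
  obtain ⟨s, hs, hrtg⟩ := hr
  induction hrtg with
  | refl => exact ⟨[s], ⟨by simp, by simp, by simp [List.Chain'], by simp [hs]⟩, by simp⟩
  | @tail u c hru hstep ih =>
    by_cases hcX : c ∈ X
    · exact ⟨[c], ⟨by simp, by simp, by simp [List.Chain'], by simp [hcX]⟩, by simp⟩
    · obtain ⟨h', hh', hhd'⟩ := ih
      by_cases hch : c ∈ h'
      · exact hsaw_suffix h' hh' c hch
      · have hne' : h' ≠ [] := hh'.1
        refine ⟨c :: h', ⟨by simp, ?_, ?_, ?_⟩, by simp⟩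
        · exact List.nodup_cons.mpr ⟨hch, hh'.2.1⟩
        · refine List.isChain_cons.mpr ⟨?_, hh'.2.2.1⟩
          intro y hy
          rw [hhd'] at hy
          simp only [Option.mem_def, Option.some_inj] at hy
          subst hy
          exact hstep
        · intro x hx
          have hlast : (c :: h').getLast? = h'.getLast? := getLast?_cons_ne hne'
          rcases List.mem_cons.mp hx with rfl | hxh
          · rw [hlast]
            constructor
            · intro hxX; exact absurd hxX hcX
            · intro hl
              exfalso
              have : x ∈ h' := by
                rw [List.getLast?_eq_getLast hne', Option.some_inj] at hl
                rw [← hl]; exact List.getLast_mem _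
              exact hch this
          · rw [hlast]; exact hh'.2.2.2 x hxh

lemma count_lemma (g : V → Option V) (X : Finset V) :
    (Nat.card {v : V // Reachable g X v} : ℝ)
      = ∑ h ∈ HLfin V, (if IsHSAW g X h then (1:ℝ) else 0) := by
  rw [Finset.sum_boole, Nat.card_eq_fintype_card, Fintype.card_subtype]
  norm_cast
  refine Finset.card_bij
    (fun v hv => Classical.choose (hsaw_exists (g := g) (X := X) (v := v) (by simpa using hv)))
    ?_ ?_ ?_
  · intro v hv
    obtain ⟨h1, h2⟩ := Classical.choose_spec (hsaw_exists (by simpa using hv : Reachable g X v))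
    simp only [Finset.mem_filter]
    exact ⟨mem_HLfin.mpr h1.2.1, h1⟩
  · intro v₁ hv₁ v₂ hv₂ heq
    obtain ⟨h1, h2⟩ := Classical.choose_spec (hsaw_exists (by simpa using hv₁ : Reachable g X v₁))
    obtain ⟨h3, h4⟩ := Classical.choose_spec (hsaw_exists (by simpa using hv₂ : Reachable g X v₂))
    beta_reduce at heq
    rw [heq] at h2
    rw [h2] at h4
    exact Option.some_inj.mp h4
  · intro h hh
    simp only [Finset.mem_filter] at hh
    obtain ⟨hhl, hhs⟩ := hh
    obtain ⟨v, hv⟩ : ∃ v, h.head? = some v := by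
      cases h with
      | nil => exact absurd rfl hhs.1
      | cons a t => exact ⟨a, rfl⟩
    have hr : Reachable g X v := hsaw_head_reachable h v hhs hv
    refine ⟨v, by simpa using hr, ?_⟩
    obtain ⟨h1, h2⟩ := Classical.choose_spec (hsaw_exists (by simpa using hr : Reachable g X v))
    exact hsaw_unique _ _ h1 hhs (by rw [h2, hv])


lemma marg (w : V → V → ℝ) (D : Finset V) (σ : V → V) :
    (∑ g : V → Option V,
        sampleProb w g * (if ∀ v ∈ D, g v = some (σ v) then (1:ℝ) else 0))
      = ∏ v ∈ D, w (σ v) v := by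
  set F : (v : V) → Option V → ℝ := fun v o =>
    (o.elim (1 - ∑ u : V, w u v) (fun u => w u v)) *
      (if v ∈ D then (if o = some (σ v) then 1 else 0) else 1) with hF
  have key : ∀ g : V → Option V,
      sampleProb w g * (if ∀ v ∈ D, g v = some (σ v) then (1:ℝ) else 0)
        = ∏ v : V, F v (g v) := by
    intro g
    simp only [hF]
    rw [Finset.prod_mul_distrib]
    congr 1
    rw [Finset.prod_ite_mem, Finset.univ_inter, Finset.prod_boole]
    simp
  calc (∑ g : V → Option V,
        sampleProb w g * (if ∀ v ∈ D, g v = some (σ v) then (1:ℝ) else 0))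
      = ∑ g : V → Option V, ∏ v : V, F v (g v) :=
        Finset.sum_congr rfl (fun g _ => key g)
    _ = ∑ g ∈ Fintype.piFinset (fun _ : V => (Finset.univ : Finset (Option V))),
          ∏ v : V, F v (g v) := by rw [Fintype.piFinset_univ]
    _ = ∏ v : V, ∑ o : Option V, F v o := (Finset.prod_univ_sum _ _).symm
    _ = ∏ v : V, (if v ∈ D then w (σ v) v else 1) := by
        apply Finset.prod_congr rfl
        intro v _
        by_cases hv : v ∈ D
        · simp only [hF, hv, if_true, Fintype.sum_option, Option.elim]
          simp only [mul_ite, mul_one, mul_zero, Option.some_inj]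
          rw [Finset.sum_ite_eq' Finset.univ (σ v) (fun u => w u v)]
          simp
        · simp only [hF, hv, if_false, mul_one, Fintype.sum_option, Option.elim]
          ring
    _ = ∏ v ∈ D, w (σ v) v := by
        rw [Finset.prod_ite_mem, Finset.univ_inter]

lemma chain_decomp : ∀ (h : List V), h.Nodup →
    ∃ (D : Finset V) (σ : V → V),
      (∀ g : V → Option V, h.Chain' (fun a b => g a = some b) ↔ ∀ v ∈ D, g v = some (σ v)) ∧
      (∀ v ∈ D, v ∈ h ∧ σ v ∈ h) := by
  intro h
  induction h with
  | nil => exact fun _ => ⟨∅, id, by simp [List.Chain'], by simp⟩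
  | cons a t ih =>
    intro hnd
    cases t with
    | nil => exact ⟨∅, id, by simp [List.Chain'], by simp⟩
    | cons b s =>
      obtain ⟨D, σ, hiff, hmem⟩ := ih (List.nodup_cons.mp hnd).2
      have haD : a ∉ D := fun haD => (List.nodup_cons.mp hnd).1 (hmem a haD).1
      refine ⟨insert a D, Function.update σ a b, ?_, ?_⟩
      · intro g
        rw [show List.Chain' (fun a b => g a = some b) (a :: b :: s) ↔ g a = some b ∧ List.Chain' (fun a b => g a = some b) (b :: s) from List.isChain_cons_cons, hiff g, Finset.forall_mem_insert, Function.update_self]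
        constructor
        · rintro ⟨h1, h2⟩
          refine ⟨h1, fun v hv => ?_⟩
          rw [Function.update_of_ne (by rintro rfl; exact haD hv)]
          exact h2 v hv
        · rintro ⟨h1, h2⟩
          refine ⟨h1, fun v hv => ?_⟩
          have := h2 v hv
          rwa [Function.update_of_ne (by rintro rfl; exact haD hv)] at this
      · intro v hv
        rcases Finset.mem_insert.mp hv with rfl | hvD
        · exact ⟨by simp, by simp [Function.update_self]⟩
        · constructor
          · exact List.mem_cons_of_mem a (hmem v hvD).1
          · rw [Function.update_of_ne (by rintro rfl; exact haD hvD)]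
            exact List.mem_cons_of_mem a (hmem v hvD).2


-- chain next-step lemma
lemma chain_next {r : V → V → Prop} :
    ∀ (h : List V) (v : V), h.Chain' r → v ∈ h → h.getLast? ≠ some v → ∃ u, r v u := by
  intro h
  induction h with
  | nil => intro v _ hv; simp at hv
  | cons a t ih =>
    intro v hc hv hl
    cases t with
    | nil =>
      simp only [List.mem_singleton] at hv
      subst hv
      simp at hl
    | cons b s =>
      rcases List.mem_cons.mp hv with rfl | hvt
      · exact ⟨b, (List.isChain_cons_cons.mp hc).1⟩
      · refine ih v (List.isChain_cons_cons.mp hc).2 hvt ?_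
        rwa [getLast?_cons_ne (by simp)] at hl

-- factorization of the (g, X)-sum
lemma wp_factor (w0 : V → V → ℝ) (VI : Finset V) (p : V → ℝ) (Y : Finset V → Finset V)
    (h : List V) :
    (∑ g : V → Option V, ∑ X ∈ VI.powerset,
        (if IsHSAW g (Y X) h then sampleProb w0 g * seedProb VI p X else 0))
      = (∑ g : V → Option V,
          sampleProb w0 g * (if h.Chain' (fun a b => g a = some b) then (1:ℝ) else 0)) *
        (∑ X ∈ VI.powerset,
          (if (h ≠ [] ∧ h.Nodup ∧ ∀ v ∈ h, (v ∈ Y X ↔ h.getLast? = some v))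
            then seedProb VI p X else 0)) := by
  rw [Finset.sum_mul_sum]
  apply Finset.sum_congr rfl
  intro g _
  apply Finset.sum_congr rfl
  intro X _
  by_cases hC : h.Chain' (fun a b => g a = some b)
  · by_cases hP : (h ≠ [] ∧ h.Nodup ∧ ∀ v ∈ h, (v ∈ Y X ↔ h.getLast? = some v))
    · have : IsHSAW g (Y X) h := ⟨hP.1, hP.2.1, hC, hP.2.2⟩
      rw [if_pos this, if_pos hC, if_pos hP, mul_one]
    · have : ¬ IsHSAW g (Y X) h := fun hh => hP ⟨hh.1, hh.2.1, hh.2.2.2⟩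
      simp [this, hP]
  · have : ¬ IsHSAW g (Y X) h := fun hh => hC hh.2.2.1
    simp [this, hC]


def wpDel (w : V → V → ℝ) (VI : Finset V) (p : V → ℝ) (S : Finset V) (h : List V) : ℝ :=
  ∑ g : V → Option V, ∑ X ∈ VI.powerset,
    (if IsHSAW g (X \ S) h then
      sampleProb (fun u v => if u ∈ S ∨ v ∈ S then 0 else w u v) g * seedProb VI p X else 0)

lemma gp_eq (w : V → V → ℝ) (S : Finset V) (h : List V) (hnd : h.Nodup)
    (hdisj : ∀ v ∈ S, v ∉ h) :
    (∑ g : V → Option V, sampleProb (fun u v => if u ∈ S ∨ v ∈ S then 0 else w u v) g *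
        (if h.Chain' (fun a b => g a = some b) then (1:ℝ) else 0))
    = ∑ g : V → Option V, sampleProb w g *
        (if h.Chain' (fun a b => g a = some b) then (1:ℝ) else 0) := by
  obtain ⟨D, σ, hiff, hmem⟩ := chain_decomp h hnd
  have e1 : ∀ (w0 : V → V → ℝ),
      (∑ g : V → Option V, sampleProb w0 g *
        (if h.Chain' (fun a b => g a = some b) then (1:ℝ) else 0))
      = ∏ v ∈ D, w0 (σ v) v := by
    intro w0
    rw [← marg w0 D σ]
    apply Finset.sum_congr rfl
    intro g _
    congr 1
    simp_rw [hiff g]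
  rw [e1, e1]
  apply Finset.prod_congr rfl
  intro v hv
  have h1 : σ v ∉ S := fun hs => hdisj _ hs (hmem v hv).2
  have h2 : v ∉ S := fun hs => hdisj _ hs (hmem v hv).1
  simp [h1, h2]

lemma wpDel_eq_walkProb {w : V → V → ℝ} {VI : Finset V} {p : V → ℝ} {S : Finset V}
    {h : List V} (hnd : h.Nodup) (hdisj : ∀ v ∈ S, v ∉ h) :
    wpDel w VI p S h = walkProb w VI p h := by
  have e1 : wpDel w VI p S h = _ :=
    wp_factor (fun u v => if u ∈ S ∨ v ∈ S then 0 else w u v) VI p (fun X => X \ S) h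
  have e2 : walkProb w VI p h = _ := wp_factor w VI p (fun X => X) h
  rw [e1, e2, gp_eq w S h hnd hdisj]
  congr 1
  apply Finset.sum_congr rfl
  intro X _
  have hvS : ∀ v ∈ h, v ∉ S := fun v hv hvS => hdisj v hvS hv
  have hcond : (∀ v ∈ h, (v ∈ X \ S ↔ h.getLast? = some v))
      ↔ (∀ v ∈ h, (v ∈ X ↔ h.getLast? = some v)) := by
    constructor
    · intro hc v hv
      rw [← hc v hv, Finset.mem_sdiff, and_iff_left (hvS v hv)]
    · intro hc v hv
      rw [Finset.mem_sdiff, and_iff_left (hvS v hv)]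
      exact hc v hv
  exact if_congr (and_congr_right fun _ => and_congr_right fun _ => hcond) rfl rfl

lemma wpDel_zero {w : V → V → ℝ} {VI : Finset V} {p : V → ℝ} {S : Finset V}
    {h : List V} (hhit : ∃ v ∈ S, v ∈ h) : wpDel w VI p S h = 0 := by
  obtain ⟨v₀, hv₀S, hv₀h⟩ := hhit
  apply Finset.sum_eq_zero
  intro g _
  apply Finset.sum_eq_zero
  intro X _
  by_cases hh : IsHSAW g (X \ S) h
  · have hlast : h.getLast? ≠ some v₀ := by
      intro hl
      have := (hh.2.2.2 v₀ hv₀h).mpr hl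
      exact (Finset.mem_sdiff.mp this).2 hv₀S
    obtain ⟨u, hu⟩ := chain_next h v₀ hh.2.2.1 hv₀h hlast
    have hz : sampleProb (fun u v => if u ∈ S ∨ v ∈ S then 0 else w u v) g = 0 := by
      unfold sampleProb
      apply Finset.prod_eq_zero (Finset.mem_univ v₀)
      rw [hu]
      simp [hv₀S]
    rw [if_pos hh, hz, zero_mul]
  · rw [if_neg hh]

lemma walkProb_zero {w : V → V → ℝ} {VI : Finset V} {p : V → ℝ}
    {h : List V} (hno : ¬ ∃ v ∈ VI, h.getLast? = some v) : walkProb w VI p h = 0 := by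
  apply Finset.sum_eq_zero
  intro g _
  apply Finset.sum_eq_zero
  intro X hX
  by_cases hh : IsHSAW g X h
  · exfalso
    have hne := hh.1
    have hl : h.getLast? = some (h.getLast hne) := List.getLast?_eq_getLast hne
    have hxX : h.getLast hne ∈ X := (hh.2.2.2 _ (List.getLast_mem hne)).mpr hl
    exact hno ⟨h.getLast hne, Finset.mem_powerset.mp hX hxX, hl⟩
  · rw [if_neg hh]




lemma sum_swap3 {A B C : Type} (sa : Finset A) (sb : Finset B) (sc : Finset C)
    (f : A → B → C → ℝ) :
    ∑ a ∈ sa, ∑ b ∈ sb, ∑ c ∈ sc, f a b c = ∑ c ∈ sc, ∑ b ∈ sb, ∑ a ∈ sa, f a b c :=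
  calc ∑ a ∈ sa, ∑ b ∈ sb, ∑ c ∈ sc, f a b c
      = ∑ a ∈ sa, ∑ c ∈ sc, ∑ b ∈ sb, f a b c :=
        Finset.sum_congr rfl (fun a _ => Finset.sum_comm)
    _ = ∑ c ∈ sc, ∑ a ∈ sa, ∑ b ∈ sb, f a b c := Finset.sum_comm
    _ = ∑ c ∈ sc, ∑ b ∈ sb, ∑ a ∈ sa, f a b c :=
        Finset.sum_congr rfl (fun c _ => Finset.sum_comm)

lemma influenceVI_eq (w : V → V → ℝ) (VI : Finset V) (p : V → ℝ) :
    influenceVI w VI p = ∑ h ∈ HLfin V, walkProb w VI p h := by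
  unfold influenceVI influence walkProb
  simp_rw [count_lemma, Finset.mul_sum]
  rw [sum_swap3 VI.powerset Finset.univ (HLfin V)
    (fun X g h => seedProb VI p X * (sampleProb w g * (if IsHSAW g X h then (1:ℝ) else 0)))]
  apply Finset.sum_congr rfl
  intro h _
  apply Finset.sum_congr rfl
  intro g _
  apply Finset.sum_congr rfl
  intro X _
  by_cases hh : IsHSAW g X h
  · rw [if_pos hh, if_pos hh, mul_one]; ring
  · rw [if_neg hh, if_neg hh, mul_zero, mul_zero]

lemma influenceVIDel_eq (w : V → V → ℝ) (VI : Finset V) (p : V → ℝ) (S : Finset V) :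
    influenceVIDelNodes w VI p S = ∑ h ∈ HLfin V, wpDel w VI p S h := by
  unfold influenceVIDelNodes influence wpDel
  simp_rw [count_lemma, Finset.mul_sum]
  rw [sum_swap3 VI.powerset Finset.univ (HLfin V)
    (fun X g h => seedProb VI p X *
      (sampleProb (fun u v => if u ∈ S ∨ v ∈ S then 0 else w u v) g *
        (if IsHSAW g (X \ S) h then (1:ℝ) else 0)))]
  apply Finset.sum_congr rfl
  intro h _
  apply Finset.sum_congr rfl
  intro g _
  apply Finset.sum_congr rfl
  intro X _
  by_cases hh : IsHSAW g (X \ S) h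
  · rw [if_pos hh, if_pos hh, mul_one]; ring
  · rw [if_neg hh, if_neg hh, mul_zero, mul_zero]

lemma tsum_subtype_eq_sum_filter (P : List V → Prop) (hP : ∀ l, P l → l.Nodup) (f : List V → ℝ) :
    ∑' l : {l : List V // P l}, f l.val = ∑ l ∈ (HLfin V).filter P, f l := by
  haveI : Fintype {l : List V // P l} :=
    Set.Finite.fintype (Set.Finite.subset nodup_finite (fun l hl => hP l hl))
  rw [tsum_fintype]
  exact (Finset.sum_subtype _
    (fun l => by
      simp only [Finset.mem_filter, mem_HLfin]
      exact ⟨fun h => h.2, fun h => ⟨hP l h, h⟩⟩) f).symm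


end AuxHSAW

/-- Theorem 5 (node version): for a stochastic graph `(V, E, w)`, a
probabilistic suspect set `(VI, p)` and a node set `S ⊆ V`, the node influence
suspension `D⁽ⁿ⁾(S, 𝒱_I) = I_𝒢(𝒱_I) − I_{𝒢∖S}(𝒱_I)` equals the total walk
probability of the hitting self-avoiding walks whose node set intersects `S`;
hence if `I_𝒢(𝒱_I) > 0` it equals `I_𝒢(𝒱_I)` times the probability that a random
HSAW (drawn proportionally to walk probability) has a node in `S`. -/
theorem stmt_2 {V : Type} [Fintype V] [DecidableEq V]
    (E : Finset (V × V)) (w : V → V → ℝ)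
    (hw01 : ∀ u v, 0 ≤ w u v ∧ w u v ≤ 1)
    (hwE : ∀ u v, (u, v) ∉ E → w u v = 0)
    (hwsum : ∀ v, ∑ u : V, w u v ≤ 1)
    (VI : Finset V) (p : V → ℝ) (hp : ∀ v ∈ VI, 0 ≤ p v ∧ p v ≤ 1)
    (S : Finset V) :
    influenceVI w VI p - influenceVIDelNodes w VI p S
      = (∑' h : {l : List V // (l.Nodup ∧ ∃ v ∈ VI, l.getLast? = some v) ∧
            ∃ v ∈ S, v ∈ l},
          walkProb w VI p h.val) ∧
    (0 < influenceVI w VI p →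
      influenceVI w VI p - influenceVIDelNodes w VI p S
        = influenceVI w VI p *
          ((∑' h : {l : List V // (l.Nodup ∧ ∃ v ∈ VI, l.getLast? = some v) ∧
                ∃ v ∈ S, v ∈ l},
              walkProb w VI p h.val) /
            (∑' h : {l : List V // l.Nodup ∧ ∃ v ∈ VI, l.getLast? = some v},
              walkProb w VI p h.val))) := by
  have part1 : influenceVI w VI p - influenceVIDelNodes w VI p S
      = (∑' h : {l : List V // (l.Nodup ∧ ∃ v ∈ VI, l.getLast? = some v) ∧
            ∃ v ∈ S, v ∈ l}, walkProb w VI p h.val) := by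
    rw [tsum_subtype_eq_sum_filter _ (fun l hl => hl.1.1) (walkProb w VI p)]
    rw [influenceVI_eq w VI p, influenceVIDel_eq w VI p S, ← Finset.sum_sub_distrib,
      Finset.sum_filter]
    apply Finset.sum_congr rfl
    intro h hh
    have hnd : h.Nodup := mem_HLfin.mp hh
    by_cases hhit : ∃ v ∈ S, v ∈ h
    · rw [wpDel_zero hhit, sub_zero]
      by_cases hVI : ∃ v ∈ VI, h.getLast? = some v
      · rw [if_pos ⟨⟨hnd, hVI⟩, hhit⟩]
      · rw [walkProb_zero hVI, if_neg (fun hq => hVI hq.1.2)]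
    · rw [wpDel_eq_walkProb hnd (fun v hvS hvh => hhit ⟨v, hvS, hvh⟩), sub_self,
        if_neg (fun hq => hhit hq.2)]
  refine ⟨part1, ?_⟩
  intro hpos
  have hB : (∑' h : {l : List V // l.Nodup ∧ ∃ v ∈ VI, l.getLast? = some v},
      walkProb w VI p h.val) = influenceVI w VI p := by
    rw [tsum_subtype_eq_sum_filter _ (fun l hl => hl.1) (walkProb w VI p),
      influenceVI_eq w VI p, Finset.sum_filter]
    apply Finset.sum_congr rfl
    intro h hh
    by_cases hVI : ∃ v ∈ VI, h.getLast? = some v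
    · rw [if_pos ⟨mem_HLfin.mp hh, hVI⟩]
    · rw [if_neg (fun hq => hVI hq.2), walkProb_zero hVI]
  rw [part1, hB, mul_comm, div_mul_cancel₀ _ (ne_of_gt hpos)]
end
end

section
/- Sample-complexity guarantee for greedy on samples (step S1 of Lemma A.2): assume the sampling framework with ground set E of size m, distribution μ, constant I > 0, integer k with 1 ≤ k ≤ m, ε ∈ (0,1), δ ∈ (0,1), and OPT_k > 0. Suppose the number of independent samples satisfies N ≥ (2 − 1/e)² (2 + (2/3)ε) · I · (ln(6/δ) + ln C(m,k)) / (OPT_k · ε²), where C(m,k) is the binomial coefficient. Then for every function A that maps each sample sequence (R₁,…,R_N) to a size-k set T̂ ⊆ E satisfying Cov(T̂) ≥ (1 − 1/e) · max{Cov(T) : T ⊆ E, |T| = k} on that sample sequence, we have Pr[D(A(R₁,…,R_N)) ≥ (1 − 1/e − ε) · OPT_k] ≥ 1 − δ/3, the probability being over the N independent samples. -/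
open Finset



set_option maxHeartbeats 1000000 in
private lemma keyA2 {x c ε : ℝ} (hx0 : 0 < x) (hx1 : x ≤ 1) (hc : 1.62 ≤ c) (hε : ε = c * x) :
    Real.exp (3*x/(3+x)) - 1 - 3*x/(3+x) - (3*x/(3+x))*x ≤ - (x^2 / (2 + 2/3*ε)) := by
  have h3 : (0:ℝ) < 3 + x := by linarith
  obtain ⟨t, htdef⟩ : ∃ t : ℝ, t = 3*x/(3+x) := ⟨_, rfl⟩
  rw [← htdef]
  have ht : t * (3+x) = 3*x := by
    rw [htdef]; field_simp
  have ht0 : 0 ≤ t := by rw [htdef]; positivity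
  have ht1 : t ≤ 1 := by rw [htdef, div_le_one h3]; linarith
  have h4 : Real.exp t ≤ 1 + t + t^2/2 + t^3/6 + 5*t^4/96 := by
    have := Real.exp_bound' ht0 ht1 (n := 4) (by norm_num)
    calc Real.exp t ≤ (∑ m ∈ Finset.range 4, t ^ m / m.factorial) + t ^ 4 * (4+1) / (Nat.factorial 4 * 4) := this
      _ = 1 + t + t^2/2 + t^3/6 + 5*t^4/96 := by
          simp [Finset.sum_range_succ, Nat.factorial]; ring
  have e2 : t^2*(3+x)^2 = 9*x^2 := by rw [← mul_pow, ht]; ring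
  have e3 : t^3*(3+x)^3 = 27*x^3 := by rw [← mul_pow, ht]; ring
  have e4 : t^4*(3+x)^4 = 81*x^4 := by rw [← mul_pow, ht]; ring
  have hid : ((t^2/2 + t^3/6 + 5*t^4/96 - t*x) * (2 + 27/25*x) + x^2) * (3+x)^4
      = -(837/50)*x^3 - (6921/400)*x^4 - (7107/800)*x^5 - (56/25)*x^6 := by
    linear_combination ((2+27/25*x)*(3+x)^2/2) * e2 + ((2+27/25*x)*(3+x)/6) * e3
      + (5*(2+27/25*x)/96) * e4 + (-(x*(2+27/25*x)*(3+x)^3)) * ht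
  have hQ : (t^2/2 + t^3/6 + 5*t^4/96 - t*x) * (2 + 27/25*x) + x^2 ≤ 0 := by
    have hneg : ((t^2/2 + t^3/6 + 5*t^4/96 - t*x) * (2 + 27/25*x) + x^2) * (3+x)^4 ≤ 0 := by
      rw [hid]; nlinarith [pow_pos hx0 3, pow_pos hx0 4, pow_pos hx0 5, pow_pos hx0 6]
    have h34 : (0:ℝ) < (3+x)^4 := by positivity
    refine le_of_mul_le_mul_right ?_ h34
    rw [zero_mul]; exact hneg
  have hd1 : (0:ℝ) < 2 + 27/25*x := by linarith
  have hd2 : (0:ℝ) < 2 + 2/3*ε := by nlinarith [mul_pos (show (0:ℝ) < c by linarith) hx0]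
  have step1 : t^2/2 + t^3/6 + 5*t^4/96 - t*x ≤ -(x^2 / (2 + 27/25*x)) := by
    rw [le_neg, div_le_iff₀ hd1]; nlinarith [hQ]
  have hle : 2 + 27/25*x ≤ 2 + 2/3*ε := by
    linarith [mul_nonneg (show (0:ℝ) ≤ c - 1.62 by linarith) hx0.le]
  have step2 : x^2/(2 + 2/3*ε) ≤ x^2/(2 + 27/25*x) :=
    div_le_div_of_nonneg_left (sq_nonneg x) hd1 hle
  linarith [h4, step1, step2]

private lemma keyA1 {x : ℝ} (hx0 : 0 ≤ x) (hx1 : x ≤ 1) :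
    Real.exp (-x) - 1 + x - x^2 ≤ -(x^2/2) := by
  have hb := Real.exp_bound (x := -x) (by rw [abs_neg, abs_of_nonneg hx0]; exact hx1) (n := 4) (by norm_num)
  rw [abs_neg, abs_of_nonneg hx0] at hb
  have hsum : ∑ m ∈ Finset.range 4, (-x) ^ m / m.factorial = 1 - x + x^2/2 - x^3/6 := by
    simp [Finset.sum_range_succ, Nat.factorial]; ring
  rw [hsum] at hb
  have h2 := (abs_sub_le_iff.1 hb).1
  norm_num [Nat.factorial] at h2
  have h3 : x^4 ≤ x^3 := pow_le_pow_of_le_one hx0 hx1 (by norm_num)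
  have h4 : 0 ≤ x^3 := pow_nonneg hx0 3
  linarith

private lemma sum_filter_or_le {α : Type*} [Fintype α] [DecidableEq α] (P Q : α → Prop)
    [DecidablePred P] [DecidablePred Q] (w : α → ℝ) (hw : ∀ s, 0 ≤ w s) :
    ∑ s ∈ univ.filter (fun s => P s ∨ Q s), w s
      ≤ ∑ s ∈ univ.filter P, w s + ∑ s ∈ univ.filter Q, w s := by
  have hsub : univ.filter (fun s => P s ∨ Q s) ⊆ univ.filter P ∪ univ.filter Q := by
    intro a ha
    simp only [mem_filter, mem_union, mem_univ, true_and] at ha ⊢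
    tauto
  calc ∑ s ∈ univ.filter (fun s => P s ∨ Q s), w s
      ≤ ∑ s ∈ univ.filter P ∪ univ.filter Q, w s :=
        Finset.sum_le_sum_of_subset_of_nonneg hsub (fun i _ _ => hw i)
    _ ≤ ∑ s ∈ univ.filter P, w s + ∑ s ∈ univ.filter Q, w s := by
        have := Finset.sum_union_inter (s₁ := univ.filter P) (s₂ := univ.filter Q) (f := w)
        have hnn : 0 ≤ ∑ s ∈ univ.filter P ∩ univ.filter Q, w s :=
          Finset.sum_nonneg (fun i _ => hw i)
        linarith

private lemma union_bound {α β : Type*} [Fintype α] [DecidableEq β] (𝒯 : Finset β)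
    (P : β → α → Prop) [∀ T, DecidablePred (P T)]
    (w : α → ℝ) (hw : ∀ s, 0 ≤ w s) :
    ∑ s ∈ univ.filter (fun s => ∃ T ∈ 𝒯, P T s), w s
      ≤ ∑ T ∈ 𝒯, ∑ s ∈ univ.filter (P T), w s := by
  classical
  induction 𝒯 using Finset.induction_on with
  | empty => simp
  | insert _ _ ha ih =>
    rename_i a 𝒯'
    rw [Finset.sum_insert ha]
    have heq : (univ.filter (fun s => ∃ T ∈ insert a 𝒯', P T s))
        = univ.filter (fun s => P a s ∨ ∃ T ∈ 𝒯', P T s) := by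
      apply Finset.filter_congr; intro s _; simp [Finset.mem_insert, or_and_right, exists_or]
    rw [heq]
    calc ∑ s ∈ univ.filter (fun s => P a s ∨ ∃ T ∈ 𝒯', P T s), w s
        ≤ ∑ s ∈ univ.filter (P a), w s + ∑ s ∈ univ.filter (fun s => ∃ T ∈ 𝒯', P T s), w s :=
          sum_filter_or_le _ _ w hw
      _ ≤ _ := by linarith [ih]

private lemma chernoff {α : Type*} [Fintype α] [DecidableEq α] (Nn : ℕ)
    (q : α → ℝ) (hq0 : ∀ R, 0 ≤ q R) (hq1 : ∑ R : α, q R = 1)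
    (hit : α → Prop) [DecidablePred hit]
    (t a : ℝ)
    (P : (Fin Nn → α) → Prop) [DecidablePred P]
    (hP : ∀ s, P s → t * a ≤ t * ((univ.filter (fun j : Fin Nn => hit (s j))).card : ℝ)) :
    ∑ s ∈ univ.filter P, ∏ j, q (s j)
      ≤ Real.exp ((Nn : ℝ) * (∑ R ∈ univ.filter hit, q R) * (Real.exp t - 1) - t * a) := by
  set p : ℝ := ∑ R ∈ univ.filter hit, q R with hp
  have hp0 : 0 ≤ p := Finset.sum_nonneg (fun R _ => hq0 R)
  set g : α → ℝ := fun R => q R * Real.exp (t * (if hit R then 1 else 0)) with hg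
  -- per-sample expansion
  have hcov : ∀ s : Fin Nn → α,
      (∏ j, g (s j)) = (∏ j, q (s j)) *
        Real.exp (t * ((univ.filter (fun j : Fin Nn => hit (s j))).card : ℝ)) := by
    intro s
    rw [Finset.prod_mul_distrib, ← Real.exp_sum]
    congr 1
    rw [Finset.card_filter]
    push_cast
    rw [Finset.mul_sum]
  -- sum of g
  have hgsum : ∑ R : α, g R = 1 + p * (Real.exp t - 1) := by
    rw [hg]
    rw [← Finset.sum_filter_add_sum_filter_not univ hit]
    have h1 : ∑ R ∈ univ.filter hit, q R * Real.exp (t * (if hit R then 1 else 0))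
        = p * Real.exp t := by
      rw [hp, Finset.sum_mul]
      apply Finset.sum_congr rfl
      intro R hR
      rw [Finset.mem_filter] at hR
      rw [if_pos hR.2, mul_one]
    have h2 : ∑ R ∈ univ.filter (fun R => ¬ hit R), q R * Real.exp (t * (if hit R then 1 else 0))
        = ∑ R ∈ univ.filter (fun R => ¬ hit R), q R := by
      apply Finset.sum_congr rfl
      intro R hR
      rw [Finset.mem_filter] at hR
      rw [if_neg hR.2, mul_zero, Real.exp_zero, mul_one]
    rw [h1, h2]
    have h3 : ∑ R ∈ univ.filter (fun R => ¬ hit R), q R = 1 - p := by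
      have := Finset.sum_filter_add_sum_filter_not univ hit q
      rw [hq1] at this
      linarith [this]
    rw [h3]; ring
  -- main chain
  have step1 : ∑ s ∈ univ.filter P, ∏ j, q (s j)
      ≤ ∑ s ∈ univ.filter P, (∏ j, q (s j)) *
          Real.exp (t * ((univ.filter (fun j : Fin Nn => hit (s j))).card : ℝ) - t * a) := by
    apply Finset.sum_le_sum
    intro s hs
    rw [Finset.mem_filter] at hs
    have h1 : (0:ℝ) ≤ ∏ j, q (s j) := Finset.prod_nonneg (fun j _ => hq0 (s j))
    have h2 : (1:ℝ) ≤ Real.exp (t * ((univ.filter (fun j : Fin Nn => hit (s j))).card : ℝ) - t * a) := by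
      rw [← Real.exp_zero]
      apply Real.exp_le_exp.2
      linarith [hP s hs.2]
    nlinarith [h1, h2]
  have step2 : ∑ s ∈ univ.filter P, (∏ j, q (s j)) *
          Real.exp (t * ((univ.filter (fun j : Fin Nn => hit (s j))).card : ℝ) - t * a)
      ≤ ∑ s : Fin Nn → α, (∏ j, q (s j)) *
          Real.exp (t * ((univ.filter (fun j : Fin Nn => hit (s j))).card : ℝ) - t * a) := by
    apply Finset.sum_le_sum_of_subset_of_nonneg (Finset.filter_subset _ _)
    intro s _ _
    have h1 : (0:ℝ) ≤ ∏ j, q (s j) := Finset.prod_nonneg (fun j _ => hq0 (s j))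
    positivity
  have step3 : ∑ s : Fin Nn → α, (∏ j, q (s j)) *
          Real.exp (t * ((univ.filter (fun j : Fin Nn => hit (s j))).card : ℝ) - t * a)
      = Real.exp (-(t*a)) * (1 + p * (Real.exp t - 1)) ^ Nn := by
    have : ∀ s : Fin Nn → α, (∏ j, q (s j)) *
          Real.exp (t * ((univ.filter (fun j : Fin Nn => hit (s j))).card : ℝ) - t * a)
        = Real.exp (-(t*a)) * ∏ j, g (s j) := by
      intro s
      rw [hcov s, Real.exp_sub, Real.exp_neg, div_eq_mul_inv]
      ring
    rw [Finset.sum_congr rfl (fun s _ => this s), ← Finset.mul_sum]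
    congr 1
    rw [← hgsum]
    exact (Fintype.sum_pow g Nn).symm
  have hbase : 0 ≤ 1 + p * (Real.exp t - 1) := by
    have hp1 : p ≤ 1 := by
      rw [hp, ← hq1]
      exact Finset.sum_le_sum_of_subset_of_nonneg (Finset.filter_subset _ _) (fun R _ _ => hq0 R)
    nlinarith [Real.exp_pos t, hp0, hp1]
  have step4 : (1 + p * (Real.exp t - 1)) ^ Nn ≤ Real.exp ((Nn:ℝ) * (p * (Real.exp t - 1))) := by
    calc (1 + p * (Real.exp t - 1)) ^ Nn ≤ Real.exp (p * (Real.exp t - 1)) ^ Nn := by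
          apply pow_le_pow_left₀ hbase
          linarith [Real.add_one_le_exp (p * (Real.exp t - 1))]
      _ = Real.exp ((Nn:ℝ) * (p * (Real.exp t - 1))) := (Real.exp_nat_mul _ Nn).symm
  calc ∑ s ∈ univ.filter P, ∏ j, q (s j)
      ≤ Real.exp (-(t*a)) * (1 + p * (Real.exp t - 1)) ^ Nn := by
        rw [← step3]; exact le_trans step1 step2
    _ ≤ Real.exp (-(t*a)) * Real.exp ((Nn:ℝ) * (p * (Real.exp t - 1))) := by
        apply mul_le_mul_of_nonneg_left step4 (Real.exp_pos _).le
    _ = Real.exp ((Nn : ℝ) * p * (Real.exp t - 1) - t * a) := by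
        rw [← Real.exp_add]; ring_nf


set_option maxHeartbeats 1600000

/-- Sample-complexity guarantee for greedy on samples (step S1 of Lemma A.2).
The ground set is a finite type `E` of cardinality `m`, `q` is a probability
distribution on subsets of `E`, `D T = I · Pr_{R∼q}[R ∩ T ≠ ∅]`, `OPT` is the
maximum of `D` over size-`k` sets, and a sequence `s : Fin N → Finset E` of
independent samples has probability `∏ j, q (s j)`.  `Cov` below denotes the
number of samples intersecting a given set.  If
`N ≥ (2−1/e)²(2+(2/3)ε)·I·(ln(6/δ)+ln C(m,k))/(OPT·ε²)` then any algorithm `A`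
returning a size-`k` set whose coverage is within a `(1−1/e)` factor of the best
size-`k` coverage outputs a `(1−1/e−ε)`-approximation with probability
at least `1 − δ/3`. -/
theorem stmt_10 {E : Type*} [Fintype E] [DecidableEq E]
    (m : ℕ) (hm : Fintype.card E = m)
    (q : Finset E → ℝ) (hq0 : ∀ R, 0 ≤ q R) (hq1 : ∑ R : Finset E, q R = 1)
    (I : ℝ) (hI : 0 < I)
    (D : Finset E → ℝ)
    (hD : ∀ T : Finset E,
      D T = I * ∑ R ∈ Finset.univ.filter (fun R : Finset E => (R ∩ T).Nonempty), q R)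
    (k : ℕ) (hk1 : 1 ≤ k) (hkm : k ≤ m)
    (ε δ : ℝ) (hε0 : 0 < ε) (hε1 : ε < 1) (hδ0 : 0 < δ) (hδ1 : δ < 1)
    (OPT : ℝ) (hOPTpos : 0 < OPT)
    (hOPTmem : ∃ T : Finset E, T.card = k ∧ D T = OPT)
    (hOPTub : ∀ T : Finset E, T.card = k → D T ≤ OPT)
    (N : ℕ)
    (hN : (N : ℝ) ≥ (2 - 1/Real.exp 1)^2 * (2 + 2/3 * ε) * I *
      ((Real.log (6/δ) + Real.log (Nat.choose m k : ℝ)) / (OPT * ε^2)))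
    (A : (Fin N → Finset E) → Finset E)
    (hAcard : ∀ s : Fin N → Finset E, (A s).card = k)
    (hAgreedy : ∀ s : Fin N → Finset E, ∀ T : Finset E, T.card = k →
      (1 - 1/Real.exp 1) *
          ((Finset.univ.filter (fun j : Fin N => ((s j) ∩ T).Nonempty)).card : ℝ)
        ≤ ((Finset.univ.filter (fun j : Fin N => ((s j) ∩ A s).Nonempty)).card : ℝ)) :
    1 - δ/3 ≤
      ∑ s ∈ Finset.univ.filter
          (fun s : Fin N → Finset E => (1 - 1/Real.exp 1 - ε) * OPT ≤ D (A s)),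
        ∏ j : Fin N, q (s j) := by
  classical
  obtain ⟨Tstar, hTsc, hTsD⟩ := hOPTmem
  have he1pos : (0:ℝ) < Real.exp 1 := Real.exp_pos 1
  have hinv : 1 / Real.exp 1 < 0.38 := by
    rw [div_lt_iff₀ he1pos]
    nlinarith [Real.exp_one_gt_d9]
  have hinv0 : (0:ℝ) < 1 / Real.exp 1 := by positivity
  obtain ⟨c, hc⟩ : ∃ c : ℝ, c = 2 - 1 / Real.exp 1 := ⟨_, rfl⟩
  rw [show (2 - 1/Real.exp 1) = c from hc.symm] at hN
  have hc1 : (1.62:ℝ) ≤ c := by rw [hc]; linarith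
  have hc0 : (0:ℝ) < c := by linarith
  obtain ⟨x, hxdef⟩ : ∃ x : ℝ, x = ε / c := ⟨_, rfl⟩
  have hx0 : 0 < x := by rw [hxdef]; exact div_pos hε0 hc0
  have hεcx : ε = c * x := by rw [hxdef]; field_simp
  have hx1 : x ≤ 1 := by rw [hxdef, div_le_one hc0]; linarith
  obtain ⟨p, hpdef⟩ : ∃ p : Finset E → ℝ,
      p = fun T => ∑ R ∈ univ.filter (fun R : Finset E => (R ∩ T).Nonempty), q R := ⟨_, rfl⟩
  have hDp : ∀ T, D T = I * p T := by intro T; rw [hpdef]; exact hD T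
  have hpnn : ∀ T, 0 ≤ p T := by
    intro T; rw [hpdef]; exact Finset.sum_nonneg (fun R _ => hq0 R)
  obtain ⟨ps, hps⟩ : ∃ ps : ℝ, ps = OPT / I := ⟨_, rfl⟩
  have hps0 : 0 < ps := by rw [hps]; exact div_pos hOPTpos hI
  have hIps : I * ps = OPT := by rw [hps]; field_simp
  have hpstar : p Tstar = ps := by
    have h1 := hDp Tstar
    rw [hTsD] at h1
    rw [hps, eq_div_iff hI.ne']
    linarith [h1]
  have hple : ∀ T : Finset E, T.card = k → p T ≤ ps := by
    intro T hT
    have h1 := hOPTub T hT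
    rw [hDp T] at h1
    rw [hps, le_div_iff₀ hI]
    linarith [h1]
  obtain ⟨L, hL⟩ : ∃ L : ℝ, L = Real.log (6/δ) + Real.log (Nat.choose m k : ℝ) := ⟨_, rfl⟩
  rw [show (Real.log (6/δ) + Real.log (Nat.choose m k : ℝ)) = L from hL.symm] at hN
  have hCpos' : 0 < Nat.choose m k := Nat.choose_pos hkm
  have hC1 : (1:ℝ) ≤ (Nat.choose m k : ℝ) := by exact_mod_cast hCpos'
  have hCpos : (0:ℝ) < (Nat.choose m k : ℝ) := by linarith
  have hlog6 : 0 < Real.log (6/δ) := Real.log_pos (by rw [lt_div_iff₀ hδ0]; linarith)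
  have hlogC : 0 ≤ Real.log (Nat.choose m k : ℝ) := Real.log_nonneg hC1
  have hLpos : 0 < L := by rw [hL]; linarith
  have hexpL : Real.exp (-L) = δ/6 * (1/(Nat.choose m k : ℝ)) := by
    rw [hL, neg_add, Real.exp_add, Real.exp_neg, Real.exp_neg,
      Real.exp_log (by positivity : (0:ℝ) < 6/δ), Real.exp_log hCpos]
    rw [one_div]
    congr 1
    rw [inv_div]
  have hexpLle : Real.exp (-L) ≤ δ/6 := by
    rw [hexpL]
    have h1 : 1/(Nat.choose m k : ℝ) ≤ 1 := by
      rw [div_le_one hCpos]; exact hC1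
    have := mul_le_of_le_one_right (show (0:ℝ) ≤ δ/6 by linarith) h1
    linarith
  -- N * ps lower bound
  have hNps : (2 + 2/3*ε) * L / x^2 ≤ (N:ℝ) * ps := by
    have hε2 : ε^2 = c^2 * x^2 := by rw [hεcx]; ring
    have h1 : c^2 * (2 + 2/3*ε) * I * (L / (OPT * ε^2)) * ps
        = (2 + 2/3*ε) * L / x^2 := by
      rw [hps, hε2]
      field_simp
    calc (2 + 2/3*ε) * L / x^2
        = (c^2 * (2 + 2/3*ε) * I * (L / (OPT * ε^2))) * ps := h1.symm
      _ ≤ (N:ℝ) * ps := mul_le_mul_of_nonneg_right hN (by rw [hps]; exact (div_pos hOPTpos hI).le)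
  have hMpos : (0:ℝ) < (N:ℝ) * ps := by
    have : (0:ℝ) < (2 + 2/3*ε) * L / x^2 := by positivity
    linarith
  have hN0 : (0:ℝ) < (N:ℝ) := by
    rcases Nat.eq_zero_or_pos N with h | h
    · subst h; norm_num at hMpos
    · exact_mod_cast h
  -- events
  obtain ⟨covf, hcovf⟩ : ∃ covf : Finset E → (Fin N → Finset E) → ℕ,
      covf = fun T s => (univ.filter (fun j : Fin N => ((s j) ∩ T).Nonempty)).card := ⟨_, rfl⟩
  obtain ⟨badLow, hbadLowDef⟩ : ∃ badLow : (Fin N → Finset E) → Prop,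
      badLow = fun s => ((covf Tstar s : ℝ) < (1 - x) * ((N:ℝ) * ps)) := ⟨_, rfl⟩
  obtain ⟨badUp, hbadUpDef⟩ : ∃ badUp : Finset E → (Fin N → Finset E) → Prop,
      badUp = fun T s => ((N:ℝ) * p T + x * ((N:ℝ) * ps) < (covf T s : ℝ)) := ⟨_, rfl⟩
  obtain ⟨𝒯, h𝒯⟩ : ∃ 𝒯 : Finset (Finset E), 𝒯 = Finset.powersetCard k univ := ⟨_, rfl⟩
  have hmemT : ∀ T : Finset E, T.card = k → T ∈ 𝒯 := by
    intro T hT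
    rw [h𝒯, Finset.mem_powersetCard]
    exact ⟨Finset.subset_univ T, hT⟩
  have hAg' : ∀ s : Fin N → Finset E, ∀ T : Finset E, T.card = k →
      (1 - 1/Real.exp 1) * ((covf T s : ℝ)) ≤ ((covf (A s) s : ℝ)) := by
    intro s T hT
    rw [hcovf]
    exact hAgreedy s T hT
  have chernoff' : ∀ (T : Finset E) (t a : ℝ) (P : (Fin N → Finset E) → Prop)
      [DecidablePred P],
      (∀ s, P s → t * a ≤ t * (covf T s : ℝ)) →
      ∑ s ∈ univ.filter P, ∏ j, q (s j)
        ≤ Real.exp ((N:ℝ) * p T * (Real.exp t - 1) - t * a) := by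
    intro T t a P hdec hP
    have hP' : ∀ s, P s →
        t * a ≤ t * ((univ.filter (fun j : Fin N => ((s j) ∩ T).Nonempty)).card : ℝ) := by
      simpa only [hcovf] using hP
    have hres := chernoff N q hq0 hq1 (fun R => (R ∩ T).Nonempty) t a P hP'
    have hpeq : (∑ R ∈ univ.filter (fun R : Finset E => (R ∩ T).Nonempty), q R) = p T := by
      rw [hpdef]
    rw [hpeq] at hres
    exact hres
  -- implication
  have himp : ∀ s : Fin N → Finset E, ¬ badLow s → (∀ T ∈ 𝒯, ¬ badUp T s) →
      (1 - 1/Real.exp 1 - ε) * OPT ≤ D (A s) := by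
    intro s h1 h2
    simp only [hbadLowDef, not_lt] at h1
    have hup := h2 (A s) (hmemT (A s) (hAcard s))
    simp only [hbadUpDef, not_lt] at hup
    have hg := hAg' s Tstar hTsc
    have hβ0 : (0:ℝ) ≤ 1 - 1/Real.exp 1 := by linarith
    -- chain
    have key : ((1 - 1/Real.exp 1) - ε) * ((N:ℝ) * ps) ≤ (N:ℝ) * p (A s) := by
      have e1 : (1 - 1/Real.exp 1) * ((1 - x) * ((N:ℝ) * ps))
          ≤ (1 - 1/Real.exp 1) * (covf Tstar s : ℝ) :=
        mul_le_mul_of_nonneg_left h1 hβ0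
      have e2 : (1 - 1/Real.exp 1) * (covf Tstar s : ℝ) ≤ (covf (A s) s : ℝ) := hg
      have e3 : (covf (A s) s : ℝ) ≤ (N:ℝ) * p (A s) + x * ((N:ℝ) * ps) := hup
      have e0 : ((1 - 1/Real.exp 1) - ε) * ((N:ℝ) * ps)
          = (1 - 1/Real.exp 1) * ((1 - x) * ((N:ℝ) * ps)) - x * ((N:ℝ) * ps) := by
        rw [hεcx, hc]; ring
      rw [e0]
      linarith [e1, e2, e3]
    have key2 : ((1 - 1/Real.exp 1) - ε) * ps ≤ p (A s) := by
      have h2 : (N:ℝ) * (((1 - 1/Real.exp 1) - ε) * ps) ≤ (N:ℝ) * p (A s) := by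
        calc (N:ℝ) * (((1 - 1/Real.exp 1) - ε) * ps)
            = ((1 - 1/Real.exp 1) - ε) * ((N:ℝ) * ps) := by ring
          _ ≤ (N:ℝ) * p (A s) := key
      exact le_of_mul_le_mul_left h2 hN0
    rw [hDp (A s)]
    calc (1 - 1/Real.exp 1 - ε) * OPT = I * (((1 - 1/Real.exp 1) - ε) * ps) := by
          rw [← hIps]; ring
      _ ≤ I * p (A s) := mul_le_mul_of_nonneg_left key2 hI.le
  -- bad-event probabilities
  have hbadLowP : ∑ s ∈ univ.filter badLow, ∏ j, q (s j) ≤ δ/6 := by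
    have hcher := chernoff' Tstar (-x) ((1 - x) * ((N:ℝ) * ps)) badLow ?_
    · have hexp1 : (N:ℝ) * p Tstar
          * (Real.exp (-x) - 1) - (-x) * ((1 - x) * ((N:ℝ) * ps))
          = ((N:ℝ) * ps) * (Real.exp (-x) - 1 + x - x^2) := by
        rw [hpstar]; ring
      rw [hexp1] at hcher
      have hA1 := keyA1 hx0.le hx1
      have hbd : ((N:ℝ) * ps) * (Real.exp (-x) - 1 + x - x^2) ≤ -L := by
        have h1 : ((N:ℝ) * ps) * (Real.exp (-x) - 1 + x - x^2)
            ≤ ((N:ℝ) * ps) * (-(x^2/2)) := mul_le_mul_of_nonneg_left hA1 hMpos.le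
        have h2 : ((N:ℝ) * ps) * (x^2/2) ≥ L := by
          have h3 : (N:ℝ) * ps ≥ 2 * L / x^2 := by
            have : (2:ℝ) * L / x^2 ≤ (2 + 2/3*ε) * L / x^2 := by
              apply div_le_div_of_nonneg_right ?_ (by positivity)
              linarith [mul_nonneg hε0.le hLpos.le]
            linarith [hNps]
          have h4 : (0:ℝ) < x^2 := by positivity
          rw [ge_iff_le, div_le_iff₀ h4] at h3
          linarith [h3]
        linarith [h1, h2]
      calc ∑ s ∈ univ.filter badLow, ∏ j, q (s j)
          ≤ Real.exp (((N:ℝ) * ps) * (Real.exp (-x) - 1 + x - x^2)) := hcher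
        _ ≤ Real.exp (-L) := Real.exp_le_exp.2 hbd
        _ ≤ δ/6 := hexpLle
    · intro s hs
      simp only [hbadLowDef] at hs
      exact mul_le_mul_of_nonpos_left (le_of_lt hs) (by linarith [hx0] : -x ≤ 0)
  have hbadUpP : ∑ s ∈ univ.filter (fun s => ∃ T ∈ 𝒯, badUp T s), ∏ j, q (s j) ≤ δ/6 := by
    have hub := union_bound 𝒯 badUp (fun s => ∏ j, q (s j))
      (fun s => Finset.prod_nonneg (fun j _ => hq0 (s j)))
    have heach : ∀ T ∈ 𝒯, ∑ s ∈ univ.filter (badUp T), ∏ j, q (s j)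
        ≤ δ/6 * (1/(Nat.choose m k : ℝ)) := by
      intro T hT
      have hTk : T.card = k := by
        rw [h𝒯, Finset.mem_powersetCard] at hT
        exact hT.2
      have hcher := chernoff' T
        (3*x/(3+x)) ((N:ℝ) * p T + x * ((N:ℝ) * ps)) (badUp T) ?_
      · have h3x : (0:ℝ) < 3 + x := by linarith
        have ht0 : (0:ℝ) ≤ 3*x/(3+x) := by positivity
        have hett : (0:ℝ) ≤ Real.exp (3*x/(3+x)) - 1 - 3*x/(3+x) := by
          linarith [Real.add_one_le_exp (3*x/(3+x))]
        have hA2 := keyA2 hx0 hx1 hc1 hεcx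
        have hbd : (N:ℝ) * p T * (Real.exp (3*x/(3+x)) - 1)
            - (3*x/(3+x)) * ((N:ℝ) * p T + x * ((N:ℝ) * ps)) ≤ -L := by
          have e1 : (N:ℝ) * p T * (Real.exp (3*x/(3+x)) - 1)
              - (3*x/(3+x)) * ((N:ℝ) * p T + x * ((N:ℝ) * ps))
              = (N:ℝ) * p T * (Real.exp (3*x/(3+x)) - 1 - 3*x/(3+x))
                - (3*x/(3+x)) * x * ((N:ℝ) * ps) := by ring
          have e2 : (N:ℝ) * p T * (Real.exp (3*x/(3+x)) - 1 - 3*x/(3+x))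
              ≤ (N:ℝ) * ps * (Real.exp (3*x/(3+x)) - 1 - 3*x/(3+x)) := by
            exact mul_le_mul_of_nonneg_right
              (mul_le_mul_of_nonneg_left (hple T hTk) hN0.le) hett
          have e3 : ((N:ℝ) * ps) * (Real.exp (3*x/(3+x)) - 1 - 3*x/(3+x) - (3*x/(3+x))*x)
              ≤ ((N:ℝ) * ps) * (-(x^2 / (2 + 2/3*ε))) :=
            mul_le_mul_of_nonneg_left hA2 hMpos.le
          have e4 : ((N:ℝ) * ps) * (x^2 / (2 + 2/3*ε)) ≥ L := by
            have hd : (0:ℝ) < 2 + 2/3*ε := by linarith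
            have h3 : (2 + 2/3*ε) * L / x^2 ≤ (N:ℝ) * ps := hNps
            have h4 : (0:ℝ) < x^2 := by positivity
            rw [div_le_iff₀ h4] at h3
            rw [ge_iff_le, ← sub_nonneg]
            have expand : (N:ℝ) * ps * (x^2 / (2 + 2/3*ε)) - L
                = ((N:ℝ) * ps * x^2 - (2 + 2/3*ε) * L) / (2 + 2/3*ε) := by
              field_simp
            rw [expand]
            apply div_nonneg ?_ hd.le
            linarith [h3]
          linarith [e1.le, e2, e3, e4]
        calc ∑ s ∈ univ.filter (badUp T), ∏ j, q (s j)
            ≤ Real.exp ((N:ℝ) * p T * (Real.exp (3*x/(3+x)) - 1)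
              - (3*x/(3+x)) * ((N:ℝ) * p T + x * ((N:ℝ) * ps))) := hcher
          _ ≤ Real.exp (-L) := Real.exp_le_exp.2 hbd
          _ ≤ δ/6 * (1/(Nat.choose m k : ℝ)) := le_of_eq hexpL
      · intro s hs
        simp only [hbadUpDef] at hs
        have h3x : (0:ℝ) < 3 + x := by linarith
        have ht0 : (0:ℝ) ≤ 3*x/(3+x) := by positivity
        exact mul_le_mul_of_nonneg_left (le_of_lt hs) ht0
    have hcard : 𝒯.card = Nat.choose m k := by
      rw [h𝒯, Finset.card_powersetCard, Finset.card_univ, hm]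
    calc ∑ s ∈ univ.filter (fun s => ∃ T ∈ 𝒯, badUp T s), ∏ j, q (s j)
        ≤ ∑ T ∈ 𝒯, ∑ s ∈ univ.filter (badUp T), ∏ j, q (s j) := hub
      _ ≤ ∑ T ∈ 𝒯, δ/6 * (1/(Nat.choose m k : ℝ)) := Finset.sum_le_sum heach
      _ = 𝒯.card * (δ/6 * (1/(Nat.choose m k : ℝ))) := by
          rw [Finset.sum_const, nsmul_eq_mul]
      _ = δ/6 := by
          rw [hcard]
          field_simp
  -- combine
  have htot : ∑ s : Fin N → Finset E, ∏ j, q (s j) = 1 := by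
    have h1 := Fintype.sum_pow q N
    rw [hq1, one_pow] at h1
    exact h1.symm
  have hsplit := Finset.sum_filter_add_sum_filter_not univ
    (fun s : Fin N → Finset E => (1 - 1/Real.exp 1 - ε) * OPT ≤ D (A s))
    (fun s : Fin N → Finset E => ∏ j, q (s j))
  rw [htot] at hsplit
  have hnotgood : ∑ s ∈ univ.filter
      (fun s : Fin N → Finset E => ¬ ((1 - 1/Real.exp 1 - ε) * OPT ≤ D (A s))),
      ∏ j, q (s j) ≤ δ/3 := by
    have hsub : univ.filter
        (fun s : Fin N → Finset E => ¬ ((1 - 1/Real.exp 1 - ε) * OPT ≤ D (A s)))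
        ⊆ univ.filter (fun s => badLow s ∨ ∃ T ∈ 𝒯, badUp T s) := by
      intro s hs
      rw [Finset.mem_filter] at hs ⊢
      refine ⟨hs.1, ?_⟩
      by_contra hcon
      push_neg at hcon
      exact hs.2 (himp s hcon.1 hcon.2)
    refine le_trans (Finset.sum_le_sum_of_subset_of_nonneg hsub
      (fun s _ _ => Finset.prod_nonneg (fun j _ => hq0 (s j)))) ?_
    refine le_trans (sum_filter_or_le _ _ _
      (fun s => Finset.prod_nonneg (fun j _ => hq0 (s j)))) ?_
    linarith [hbadLowP, hbadUpP]
  linarith [hsplit, hnotgood]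
end

section
/- Bad-event bound B⁽³⁾ (Lemma A.4): assume the sampling framework with ground set E of size m, distribution μ, constant I > 0, integer k ≥ 1, OPT_k > 0, ε ∈ (0,1), δ ∈ (0,1), and integers t, t_max with 1 ≤ t ≤ t_max. Let T* be a fixed size-k subset of E with D(T*) = OPT_k. Suppose the number of independent samples N_t satisfies N_t ≥ Λ · 2^{t−1}, where Λ = (2 + (2/3)ε) · ln(3 t_max / δ) / ε², and let ε*_t = ε · sqrt( I / ((1 + ε/3) · 2^{t−1} · OPT_k) ). Then Pr[ D_{N_t}(T*) ≤ (1 − ε*_t) · OPT_k ] ≤ δ / (3 t_max). -/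
open Finset

/-- Quadratic upper bound on `exp (-x)` for `x ≥ 0`. -/
lemma aux_exp_neg_le_quad {x : ℝ} (hx : 0 ≤ x) : Real.exp (-x) ≤ 1 - x + x ^ 2 / 2 := by
  have h1 : 1 + x + x ^ 2 / 2 ≤ Real.exp x := by
    have h := Real.sum_le_exp_of_nonneg hx 3
    simp [Finset.sum_range_succ] at h
    nlinarith [h]
  have hmul : Real.exp (-x) * Real.exp x = 1 := by
    rw [← Real.exp_add]; simp
  nlinarith [Real.exp_pos x, Real.exp_pos (-x), sq_nonneg (x ^ 2), sq_nonneg (x - 1),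
    mul_pos (Real.exp_pos (-x)) (Real.exp_pos x)]

/-- Chernoff exponential-moment core bound for products of i.i.d. finitely
supported distributions: the probability that the number of indices `j` with
`P (s j)` is at most `a` is bounded by the exponential moment expression. -/
lemma aux_chernoff_core {α : Type*} [Fintype α] [DecidableEq α]
    (q : α → ℝ) (hq0 : ∀ R, 0 ≤ q R) (hq1 : ∑ R : α, q R = 1)
    (P : α → Prop) [DecidablePred P] (p : ℝ)
    (hp : ∑ R ∈ Finset.univ.filter P, q R = p)
    (N : ℕ) (lam a : ℝ) (hlam : 0 ≤ lam) :
    (∑ s ∈ Finset.univ.filter (fun s : Fin N → α =>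
        ((Finset.univ.filter (fun j : Fin N => P (s j))).card : ℝ) ≤ a),
      ∏ j : Fin N, q (s j))
      ≤ Real.exp (lam * a + (N : ℝ) * (p * (Real.exp (-lam) - 1))) := by
  have hp0 : 0 ≤ p := by
    rw [← hp]; exact Finset.sum_nonneg fun R _ => hq0 R
  have hp1 : p ≤ 1 := by
    rw [← hp, ← hq1]
    exact Finset.sum_le_sum_of_subset_of_nonneg (Finset.filter_subset _ _)
      (fun i _ _ => hq0 i)
  set ind : α → ℝ := fun R => if P R then 1 else 0 with hind
  have hind0 : ∀ R, 0 ≤ ind R := by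
    intro R; simp only [hind]; split <;> norm_num
  have hCovsum : ∀ s : Fin N → α,
      ((Finset.univ.filter (fun j : Fin N => P (s j))).card : ℝ)
        = ∑ j : Fin N, ind (s j) := by
    intro s
    simp [hind]
  set g : α → ℝ := fun R => q R * Real.exp (-(lam * ind R)) with hg
  have hgsum : ∑ R : α, g R = 1 - p + p * Real.exp (-lam) := by
    rw [← Finset.sum_filter_add_sum_filter_not Finset.univ P g]
    have h1 : ∑ R ∈ Finset.univ.filter P, g R = p * Real.exp (-lam) := by
      rw [← hp, Finset.sum_mul]
      apply Finset.sum_congr rfl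
      intro R hR
      have hPR : P R := (Finset.mem_filter.1 hR).2
      simp [hg, hind, hPR]
    have h2 : ∑ R ∈ Finset.univ.filter (fun R => ¬ P R), g R
        = ∑ R ∈ Finset.univ.filter (fun R => ¬ P R), q R := by
      apply Finset.sum_congr rfl
      intro R hR
      have hPR : ¬ P R := (Finset.mem_filter.1 hR).2
      simp [hg, hind, hPR]
    have h3 := Finset.sum_filter_add_sum_filter_not Finset.univ P q
    rw [hq1, hp] at h3
    rw [h1, h2]
    have h4 : ∑ R ∈ Finset.univ.filter (fun R => ¬ P R), q R = 1 - p := by linarith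
    rw [h4]; ring
  -- Markov / exponential moment chain
  have hchain : (∑ s ∈ Finset.univ.filter (fun s : Fin N → α =>
        ((Finset.univ.filter (fun j : Fin N => P (s j))).card : ℝ) ≤ a),
      ∏ j : Fin N, q (s j))
      ≤ Real.exp (lam * a) * (∑ R : α, g R) ^ N := by
    calc (∑ s ∈ Finset.univ.filter (fun s : Fin N → α =>
            ((Finset.univ.filter (fun j : Fin N => P (s j))).card : ℝ) ≤ a),
          ∏ j : Fin N, q (s j))
        ≤ ∑ s ∈ Finset.univ.filter (fun s : Fin N → α =>
            ((Finset.univ.filter (fun j : Fin N => P (s j))).card : ℝ) ≤ a),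
          (∏ j : Fin N, q (s j)) * Real.exp (lam * (a - ∑ j : Fin N, ind (s j))) := by
          apply Finset.sum_le_sum
          intro s hs
          have hmem : ((Finset.univ.filter (fun j : Fin N => P (s j))).card : ℝ) ≤ a :=
            (Finset.mem_filter.1 hs).2
          rw [hCovsum s] at hmem
          have h1 : 1 ≤ Real.exp (lam * (a - ∑ j : Fin N, ind (s j))) :=
            Real.one_le_exp (mul_nonneg hlam (by linarith))
          exact le_mul_of_one_le_right
            (Finset.prod_nonneg fun j _ => hq0 (s j)) h1
      _ ≤ ∑ s : Fin N → α,
          (∏ j : Fin N, q (s j)) * Real.exp (lam * (a - ∑ j : Fin N, ind (s j))) := by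
          apply Finset.sum_le_sum_of_subset_of_nonneg (Finset.filter_subset _ _)
          intro s _ _
          exact mul_nonneg (Finset.prod_nonneg fun j _ => hq0 (s j)) (Real.exp_nonneg _)
      _ = Real.exp (lam * a) * ∑ s : Fin N → α, ∏ j : Fin N, g (s j) := by
          rw [Finset.mul_sum]
          apply Finset.sum_congr rfl
          intro s _
          have e1 : Real.exp (lam * (a - ∑ j : Fin N, ind (s j)))
              = Real.exp (lam * a) * Real.exp (-(lam * ∑ j : Fin N, ind (s j))) := by
            rw [← Real.exp_add]; ring_nf
          have e2 : -(lam * ∑ j : Fin N, ind (s j))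
              = ∑ j : Fin N, -(lam * ind (s j)) := by
            rw [Finset.mul_sum, ← Finset.sum_neg_distrib]
          have e3 : Real.exp (-(lam * ∑ j : Fin N, ind (s j)))
              = ∏ j : Fin N, Real.exp (-(lam * ind (s j))) := by
            rw [e2, Real.exp_sum]
          rw [e1, e3]
          simp only [hg]
          rw [Finset.prod_mul_distrib]
          ring
      _ = Real.exp (lam * a) * (∑ R : α, g R) ^ N := by
          rw [Fintype.sum_pow]
  have hbase : 0 ≤ ∑ R : α, g R := by
    rw [hgsum]
    nlinarith [Real.exp_pos (-lam)]
  have hstep6 : ∑ R : α, g R ≤ Real.exp (p * (Real.exp (-lam) - 1)) := by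
    rw [hgsum]
    have := Real.add_one_le_exp (p * (Real.exp (-lam) - 1))
    nlinarith
  calc (∑ s ∈ Finset.univ.filter (fun s : Fin N → α =>
        ((Finset.univ.filter (fun j : Fin N => P (s j))).card : ℝ) ≤ a),
      ∏ j : Fin N, q (s j))
      ≤ Real.exp (lam * a) * (∑ R : α, g R) ^ N := hchain
    _ ≤ Real.exp (lam * a) * (Real.exp (p * (Real.exp (-lam) - 1))) ^ N := by
        apply mul_le_mul_of_nonneg_left _ (Real.exp_nonneg _)
        exact pow_le_pow_left₀ hbase hstep6 N
    _ = Real.exp (lam * a + (N : ℝ) * (p * (Real.exp (-lam) - 1))) := by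
        rw [← Real.exp_nat_mul, ← Real.exp_add]

set_option maxHeartbeats 1200000 in
/-- Bad-event bound `B⁽³⁾` (Lemma A.4): in the sampling framework, for a fixed
optimal size-`k` set `T*` and `N_t ≥ Λ·2^{t−1}` independent samples, the
probability that the empirical suspension `D_{N_t}(T*) = I·Cov(T*)/N_t`
underestimates `OPT` by more than a `(1 − ε*_t)` factor is at most
`δ/(3·t_max)`, where `ε*_t = ε·√(I/((1+ε/3)·2^{t−1}·OPT))`. -/
theorem stmt_12 {E : Type*} [Fintype E] [DecidableEq E]
    (m : ℕ) (hm : Fintype.card E = m)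
    (q : Finset E → ℝ) (hq0 : ∀ R, 0 ≤ q R) (hq1 : ∑ R : Finset E, q R = 1)
    (I : ℝ) (hI : 0 < I)
    (D : Finset E → ℝ)
    (hD : ∀ T : Finset E,
      D T = I * ∑ R ∈ Finset.univ.filter (fun R : Finset E => (R ∩ T).Nonempty), q R)
    (k : ℕ) (hk1 : 1 ≤ k)
    (ε δ : ℝ) (hε0 : 0 < ε) (hε1 : ε < 1) (hδ0 : 0 < δ) (hδ1 : δ < 1)
    (t tmax : ℕ) (ht1 : 1 ≤ t) (httmax : t ≤ tmax)
    (OPT : ℝ) (hOPTpos : 0 < OPT)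
    (hOPTub : ∀ T : Finset E, T.card = k → D T ≤ OPT)
    (Tstar : Finset E) (hTstarcard : Tstar.card = k) (hTstar : D Tstar = OPT)
    (Λ : ℝ) (hΛ : Λ = (2 + 2/3 * ε) * Real.log (3 * (tmax : ℝ) / δ) * (1/ε^2))
    (Nt : ℕ) (hNt : (Nt : ℝ) ≥ Λ * 2^(t - 1))
    (εstar : ℝ)
    (hεstar : εstar = ε * Real.sqrt (I / ((1 + ε/3) * 2^(t - 1) * OPT))) :
    (∑ s ∈ Finset.univ.filter (fun s : Fin Nt → Finset E =>
        I * ((Finset.univ.filter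
            (fun j : Fin Nt => ((s j) ∩ Tstar).Nonempty)).card : ℝ) / (Nt : ℝ)
          ≤ (1 - εstar) * OPT),
      ∏ j : Fin Nt, q (s j)) ≤ δ / (3 * (tmax : ℝ)) := by
  -- basic positivity facts
  have htm1 : (1 : ℝ) ≤ (tmax : ℝ) := by exact_mod_cast le_trans ht1 httmax
  have hY : (1 : ℝ) < 3 * (tmax : ℝ) / δ := by
    rw [lt_div_iff₀ hδ0]; nlinarith
  have hYpos : (0 : ℝ) < 3 * (tmax : ℝ) / δ := by linarith
  have hlogpos : 0 < Real.log (3 * (tmax : ℝ) / δ) := Real.log_pos hY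
  have hpow : (0 : ℝ) < 2 ^ (t - 1) := by positivity
  have hΛpos : 0 < Λ := by
    rw [hΛ]
    apply mul_pos (mul_pos (by nlinarith) hlogpos)
    positivity
  have hNpos : (0 : ℝ) < (Nt : ℝ) := lt_of_lt_of_le (mul_pos hΛpos hpow) hNt
  have hRHSpos : 0 < δ / (3 * (tmax : ℝ)) := div_pos hδ0 (by linarith)
  -- the hitting probability p
  have hIp : I * ∑ R ∈ Finset.univ.filter
      (fun R : Finset E => (R ∩ Tstar).Nonempty), q R = OPT := by
    rw [← hD Tstar, hTstar]
  set p : ℝ := ∑ R ∈ Finset.univ.filter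
      (fun R : Finset E => (R ∩ Tstar).Nonempty), q R with hpdef
  have hppos : 0 < p := by nlinarith
  have hpI : p = OPT / I := by
    field_simp
    linarith [hIp]
  -- εstar facts
  have hBpos : (0 : ℝ) < (1 + ε / 3) * 2 ^ (t - 1) := by nlinarith
  have hApos : (0 : ℝ) < (1 + ε / 3) * 2 ^ (t - 1) * OPT := mul_pos hBpos hOPTpos
  have hεstarpos : 0 < εstar := by
    rw [hεstar]
    exact mul_pos hε0 (Real.sqrt_pos.2 (div_pos hI hApos))
  have hεsq : εstar ^ 2 = ε ^ 2 * (I / ((1 + ε / 3) * 2 ^ (t - 1) * OPT)) := by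
    rw [hεstar, mul_pow, Real.sq_sqrt (le_of_lt (div_pos hI hApos))]
  -- key size bound : Nt * p * εstar² ≥ 2 log(3 tmax / δ)
  have hc : p * εstar ^ 2 = ε ^ 2 / ((1 + ε / 3) * 2 ^ (t - 1)) := by
    rw [hεsq, hpI]
    field_simp
  have h2 : Λ * 2 ^ (t - 1) * (ε ^ 2 / ((1 + ε / 3) * 2 ^ (t - 1)))
      = 2 * Real.log (3 * (tmax : ℝ) / δ) := by
    rw [hΛ]
    field_simp
  have hkey : 2 * Real.log (3 * (tmax : ℝ) / δ) ≤ (Nt : ℝ) * p * εstar ^ 2 := by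
    have hcnn : 0 ≤ ε ^ 2 / ((1 + ε / 3) * 2 ^ (t - 1)) :=
      le_of_lt (div_pos (pow_pos hε0 2) hBpos)
    calc 2 * Real.log (3 * (tmax : ℝ) / δ)
        = Λ * 2 ^ (t - 1) * (ε ^ 2 / ((1 + ε / 3) * 2 ^ (t - 1))) := h2.symm
      _ ≤ (Nt : ℝ) * (ε ^ 2 / ((1 + ε / 3) * 2 ^ (t - 1))) :=
          mul_le_mul_of_nonneg_right hNt hcnn
      _ = (Nt : ℝ) * (p * εstar ^ 2) := by rw [hc]
      _ = (Nt : ℝ) * p * εstar ^ 2 := by ring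
  -- case split on εstar ≤ 1
  rcases le_or_gt εstar 1 with hεs1 | hεs1
  · -- main case : Chernoff bound with λ = εstar
    set a : ℝ := (1 - εstar) * p * (Nt : ℝ) with ha
    -- rewrite the event
    have hfilter : Finset.univ.filter (fun s : Fin Nt → Finset E =>
          I * ((Finset.univ.filter
              (fun j : Fin Nt => ((s j) ∩ Tstar).Nonempty)).card : ℝ) / (Nt : ℝ)
            ≤ (1 - εstar) * OPT)
        = Finset.univ.filter (fun s : Fin Nt → Finset E =>
          ((Finset.univ.filter
              (fun j : Fin Nt => ((s j) ∩ Tstar).Nonempty)).card : ℝ) ≤ a) := by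
      have key : ∀ c : ℝ, (I * c / (Nt : ℝ) ≤ (1 - εstar) * OPT ↔ c ≤ a) := by
        intro c
        rw [div_le_iff₀ hNpos, ← hIp, ha]
        constructor
        · intro h; nlinarith
        · intro h; nlinarith
      exact Finset.filter_congr fun s _ => key _
    rw [hfilter]
    have hcore := aux_chernoff_core q hq0 hq1
      (fun R : Finset E => (R ∩ Tstar).Nonempty) p hpdef.symm Nt εstar a hεstarpos.le
    refine le_trans hcore ?_
    -- bound the exponent
    have hquad := aux_exp_neg_le_quad hεstarpos.le
    have hNp : (0 : ℝ) ≤ (Nt : ℝ) * p := le_of_lt (mul_pos hNpos hppos)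
    have hexpo : εstar * a + (Nt : ℝ) * (p * (Real.exp (-εstar) - 1))
        ≤ - Real.log (3 * (tmax : ℝ) / δ) := by
      have h3 : εstar * a + (Nt : ℝ) * (p * (Real.exp (-εstar) - 1))
          ≤ - ((Nt : ℝ) * p * εstar ^ 2) / 2 := by
        rw [ha]
        nlinarith [mul_le_mul_of_nonneg_left hquad hNp]
      linarith
    calc Real.exp (εstar * a + (Nt : ℝ) * (p * (Real.exp (-εstar) - 1)))
        ≤ Real.exp (- Real.log (3 * (tmax : ℝ) / δ)) := Real.exp_le_exp.2 hexpo
      _ = δ / (3 * (tmax : ℝ)) := by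
          rw [Real.exp_neg, Real.exp_log hYpos, inv_div]
  · -- degenerate case : εstar > 1, the event is empty
    have hempty : Finset.univ.filter (fun s : Fin Nt → Finset E =>
        I * ((Finset.univ.filter
            (fun j : Fin Nt => ((s j) ∩ Tstar).Nonempty)).card : ℝ) / (Nt : ℝ)
          ≤ (1 - εstar) * OPT) = ∅ := by
      apply Finset.filter_false_of_mem
      intro s _
      have hlhs : 0 ≤ I * ((Finset.univ.filter
          (fun j : Fin Nt => ((s j) ∩ Tstar).Nonempty)).card : ℝ) / (Nt : ℝ) :=
        div_nonneg (mul_nonneg hI.le (Nat.cast_nonneg _)) hNpos.le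
      have hrhs : (1 - εstar) * OPT < 0 :=
        mul_neg_of_neg_of_pos (by linarith) hOPTpos
      exact not_le.mpr (lt_of_lt_of_le hrhs hlhs)
    rw [hempty, Finset.sum_empty]
    exact le_of_lt hRHSpos
end
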